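/- arXiv:1810.10321 — 5 statements merged into one kernel-verified Lean document; each statement's English description precedes it below -/
import Mathlib

section
/- Let i₁, i₂, … be i.i.d. Plackett-Luce draws from a finite set S with weights θ, fix b ∈ S and i ∈ S with i ≠ b, let τ be the first time b is drawn, and let w_i(τ) be the number of times i is drawn strictly before time τ. Then w_i(τ) is geometrically distributed with success parameter θ_b/(θ_i + θ_b): Pr(w_i(τ) = m) = (θ_i/(θ_i+θ_b))^m · (θ_b/(θ_i+θ_b)) for every natural number m. -/
open MeasureTheory ProbabilityTheory

/-- Let i₁, i₂, … be i.i.d. Plackett-Luce draws from a finite set S, b ∈ S, and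
let τ be the first time b is drawn.  For i ∈ S with i ≠ b, the number of times
i is drawn strictly before τ is geometric with parameter θ_b/(θ_i+θ_b):
Pr(w_i(τ) = m) = (θ_i/(θ_i+θ_b))^m · (θ_b/(θ_i+θ_b)). -/
theorem count_before_first_hit_geometric {Ω : Type*} [MeasurableSpace Ω]
    (μ : Measure Ω) [IsProbabilityMeasure μ] {n : ℕ}
    (S : Finset (Fin n)) (hS : S.Nonempty)
    (θ : Fin n → ℝ) (hθ : ∀ i, 0 < θ i)
    (X : ℕ → Ω → Fin n) (hmeas : ∀ t, Measurable (X t))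
    (hindep : iIndepFun X μ)
    (hlaw : ∀ t i, μ {ω | X t ω = i}
      = ENNReal.ofReal (if i ∈ S then θ i / ∑ j ∈ S, θ j else 0))
    (b i : Fin n) (hb : b ∈ S) (hi : i ∈ S) (hib : i ≠ b) (m : ℕ) :
    μ {ω | ∃ t, (∀ s < t, X s ω ≠ b) ∧ X t ω = b ∧
        ((Finset.range t).filter (fun s => X s ω = i)).card = m}
      = ENNReal.ofReal
        ((θ i / (θ i + θ b)) ^ m * (θ b / (θ i + θ b))) := by
  set Z : ℝ := ∑ j ∈ S, θ j with hZdef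
  have hZpos : 0 < Z := Finset.sum_pos (fun j _ => hθ j) hS
  set ri : ℝ := θ i / Z with hridef
  set rb : ℝ := θ b / Z with hrbdef
  have hri : 0 < ri := div_pos (hθ i) hZpos
  have hrb : 0 < rb := div_pos (hθ b) hZpos
  have hpair : θ i + θ b ≤ Z := by
    have h1 : θ i + θ b = ∑ j ∈ ({i, b} : Finset (Fin n)), θ j :=
      (Finset.sum_pair hib).symm
    rw [h1, hZdef]
    refine Finset.sum_le_sum_of_subset_of_nonneg ?_ (fun j _ _ => (hθ j).le)
    intro x hx
    simp only [Finset.mem_insert, Finset.mem_singleton] at hx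
    rcases hx with rfl | rfl <;> assumption
  have hple : ri + rb ≤ 1 := by
    rw [hridef, hrbdef, ← add_div, div_le_one hZpos]; exact hpair
  set q : ℝ := 1 - (ri + rb) with hqdef
  have hq0 : 0 ≤ q := by simp only [hqdef]; linarith
  have hq1 : q < 1 := by simp only [hqdef]; linarith
  -- marginals
  have hXi : ∀ s, μ {ω | X s ω = i} = ENNReal.ofReal ri := fun s => by
    rw [hlaw s i, if_pos hi]
  have hXb : ∀ s, μ {ω | X s ω = b} = ENNReal.ofReal rb := fun s => by
    rw [hlaw s b, if_pos hb]
  have hXo : ∀ s, μ {ω | X s ω ≠ i ∧ X s ω ≠ b} = ENNReal.ofReal q := by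
    intro s
    have hmb : MeasurableSet {ω | X s ω = b} := hmeas s (measurableSet_singleton b)
    have hdisj : Disjoint {ω | X s ω = i} {ω | X s ω = b} := by
      rw [Set.disjoint_left]
      intro ω h1 h2
      exact hib (h1.symm.trans h2)
    have h1 : μ ({ω | X s ω = i} ∪ {ω | X s ω = b}) = ENNReal.ofReal (ri + rb) := by
      rw [measure_union hdisj hmb, hXi s, hXb s, ← ENNReal.ofReal_add hri.le hrb.le]
    have h2 : {ω | X s ω ≠ i ∧ X s ω ≠ b} = ({ω | X s ω = i} ∪ {ω | X s ω = b})ᶜ := by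
      ext ω; simp [not_or]
    have hmu : MeasurableSet ({ω | X s ω = i} ∪ {ω | X s ω = b}) :=
      (hmeas s (measurableSet_singleton i)).union hmb
    rw [h2, measure_compl hmu (measure_ne_top _ _), h1, measure_univ, hqdef,
      ← ENNReal.ofReal_one, ← ENNReal.ofReal_sub _ (by positivity)]
  -- the cylinder sets
  set C : ℕ → Finset ℕ → Set Ω := fun t T => ⋂ s ∈ Finset.range (t+1),
      X s ⁻¹' (if s ∈ T then {x | x = i} else if s = t then {x | x = b}
        else {x | x ≠ i ∧ x ≠ b}) with hCdef
  have hCmeas : ∀ t T, MeasurableSet (C t T) := by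
    intro t T
    refine Finset.measurableSet_biInter _ (fun s _ => hmeas s trivial)
  have hmuC : ∀ t T, T ∈ Finset.powersetCard m (Finset.range t) →
      μ (C t T) = ENNReal.ofReal (ri ^ m * q ^ (t - m) * rb) := by
    intro t T hT
    rw [Finset.mem_powersetCard] at hT
    obtain ⟨hTsub, hTcard⟩ := hT
    have htT : t ∉ T := fun h => absurd (Finset.mem_range.mp (hTsub h)) (lt_irrefl t)
    rw [hCdef]
    rw [hindep.measure_inter_preimage_eq_mul (Finset.range (t+1)) (fun s _ => trivial)]
    have hsplit : ∀ s, X s ⁻¹' (if s ∈ T then {x | x = i} else if s = t then {x | x = b}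
        else {x | x ≠ i ∧ x ≠ b})
        = if s ∈ T then {ω | X s ω = i} else if s = t then {ω | X s ω = b}
          else {ω | X s ω ≠ i ∧ X s ω ≠ b} := by
      intro s; split_ifs <;> rfl
    have hfac : ∀ s ∈ Finset.range (t+1),
        μ (X s ⁻¹' (if s ∈ T then {x | x = i} else if s = t then {x | x = b}
          else {x | x ≠ i ∧ x ≠ b}))
        = if s ∈ T then ENNReal.ofReal ri else if s = t then ENNReal.ofReal rb
            else ENNReal.ofReal q := by
      intro s _
      rw [hsplit s]
      split_ifs
      · exact hXi s
      · exact hXb s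
      · exact hXo s
    rw [Finset.prod_congr rfl hfac, Finset.range_add_one,
      Finset.prod_insert Finset.notMem_range_self, if_neg htT, if_pos rfl]
    have hinner : ∀ s ∈ Finset.range t,
        (if s ∈ T then ENNReal.ofReal ri else if s = t then ENNReal.ofReal rb
          else ENNReal.ofReal q)
        = if s ∈ T then ENNReal.ofReal ri else ENNReal.ofReal q := by
      intro s hs
      have : s ≠ t := Nat.ne_of_lt (Finset.mem_range.mp hs)
      split_ifs <;> rfl
    rw [Finset.prod_congr rfl hinner,
      ← Finset.prod_filter_mul_prod_filter_not (Finset.range t) (· ∈ T)]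
    have hf1 : Finset.filter (· ∈ T) (Finset.range t) = T := by
      rw [Finset.filter_mem_eq_inter, Finset.inter_eq_right.mpr hTsub]
    have hf2 : (Finset.filter (fun s => ¬ s ∈ T) (Finset.range t)).card = t - m := by
      rw [← Finset.sdiff_eq_filter, Finset.card_sdiff_of_subset hTsub, Finset.card_range, hTcard]
    rw [hf1]
    rw [Finset.prod_congr rfl (fun s hs => if_pos hs : ∀ s ∈ T, _ = ENNReal.ofReal ri)]
    have hg2 : ∀ s ∈ Finset.filter (fun s => ¬ s ∈ T) (Finset.range t),
        (if s ∈ T then ENNReal.ofReal ri else ENNReal.ofReal q) = ENNReal.ofReal q := by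
      intro s hs
      rw [if_neg (Finset.mem_filter.mp hs).2]
    rw [Finset.prod_congr rfl hg2, Finset.prod_const, Finset.prod_const, hTcard, hf2,
      ← ENNReal.ofReal_pow hri.le, ← ENNReal.ofReal_pow hq0,
      ← ENNReal.ofReal_mul (by positivity), ← ENNReal.ofReal_mul (by positivity)]
    ring_nf
  -- key structural fact
  have hkey : ∀ t T, T ∈ Finset.powersetCard m (Finset.range t) → ∀ ω, ω ∈ C t T →
      (Finset.range t).filter (fun s => X s ω = i) = T ∧
      (∀ s < t, X s ω ≠ b) ∧ X t ω = b := by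
    intro t T hT ω hω
    rw [Finset.mem_powersetCard] at hT
    obtain ⟨hTsub, hTcard⟩ := hT
    have htT : t ∉ T := fun h => absurd (Finset.mem_range.mp (hTsub h)) (lt_irrefl t)
    simp only [hCdef, Set.mem_iInter, Set.mem_preimage] at hω
    have hXt : X t ω = b := by
      have h := hω t (Finset.mem_range.mpr (Nat.lt_succ_self t))
      rwa [if_neg htT, if_pos rfl] at h
    have hnb : ∀ s < t, X s ω ≠ b := by
      intro s hst
      have h := hω s (Finset.mem_range.mpr (Nat.lt_succ_of_lt hst))
      by_cases hsT : s ∈ T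
      · rw [if_pos hsT] at h
        have : X s ω = i := h
        rw [this]; exact hib
      · rw [if_neg hsT, if_neg (Nat.ne_of_lt hst)] at h
        exact h.2
    refine ⟨?_, hnb, hXt⟩
    ext s
    simp only [Finset.mem_filter, Finset.mem_range]
    constructor
    · rintro ⟨hst, hXsi⟩
      by_contra hsT
      have h := hω s (Finset.mem_range.mpr (Nat.lt_succ_of_lt hst))
      rw [if_neg hsT, if_neg (Nat.ne_of_lt hst)] at h
      exact h.1 hXsi
    · intro hsT
      have hst := Finset.mem_range.mp (hTsub hsT)
      have h := hω s (Finset.mem_range.mpr (Nat.lt_succ_of_lt hst))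
      rw [if_pos hsT] at h
      exact ⟨hst, h⟩
  -- the per-time event
  set A : ℕ → Set Ω := fun t => {ω | (∀ s < t, X s ω ≠ b) ∧ X t ω = b ∧
      ((Finset.range t).filter (fun s => X s ω = i)).card = m} with hAdef
  have hAset : ∀ t, A t = ⋃ T ∈ Finset.powersetCard m (Finset.range t), C t T := by
    intro t
    ext ω
    simp only [hAdef, Set.mem_setOf_eq, Set.mem_iUnion]
    constructor
    · rintro ⟨hnb, hbt, hcard⟩
      refine ⟨(Finset.range t).filter (fun s => X s ω = i), ?_, ?_⟩
      · rw [Finset.mem_powersetCard]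
        exact ⟨Finset.filter_subset _ _, hcard⟩
      · simp only [hCdef, Set.mem_iInter, Set.mem_preimage]
        intro s hs
        by_cases hsT : s ∈ (Finset.range t).filter (fun s => X s ω = i)
        · rw [if_pos hsT]
          exact (Finset.mem_filter.mp hsT).2
        · rw [if_neg hsT]
          by_cases hst : s = t
          · rw [if_pos hst]; subst hst; exact hbt
          · rw [if_neg hst]
            have hslt : s < t := by
              have := Finset.mem_range.mp hs; omega
            refine ⟨fun hXsi => hsT ?_, hnb s hslt⟩
            exact Finset.mem_filter.mpr ⟨Finset.mem_range.mpr hslt, hXsi⟩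
    · rintro ⟨T, hT, hω⟩
      obtain ⟨hfil, hnb, hXt⟩ := hkey t T hT ω hω
      refine ⟨hnb, hXt, ?_⟩
      rw [hfil]
      exact (Finset.mem_powersetCard.mp hT).2
  have hAmeas : ∀ t, MeasurableSet (A t) := by
    intro t
    rw [hAset t]
    exact Finset.measurableSet_biUnion _ (fun T _ => hCmeas t T)
  have hmuA : ∀ t, μ (A t)
      = ENNReal.ofReal ((t.choose m : ℝ) * (ri ^ m * q ^ (t - m) * rb)) := by
    intro t
    rw [hAset t, measure_biUnion_finset ?_ (fun T _ => hCmeas t T)]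
    · rw [Finset.sum_congr rfl (hmuC t), Finset.sum_const, Finset.card_powersetCard,
        Finset.card_range, nsmul_eq_mul,
        ← ENNReal.ofReal_natCast (t.choose m), ← ENNReal.ofReal_mul (by positivity)]
    · intro T hT T' hT' hne
      rw [Function.onFun, Set.disjoint_left]
      intro ω hω hω'
      exact hne (((hkey t T (by exact_mod_cast hT) ω hω).1.symm.trans
        (hkey t T' (by exact_mod_cast hT') ω hω').1))
  -- disjointness of the A t
  have hdisjA : Pairwise (Function.onFun Disjoint A) := by
    have key : ∀ t t', t < t' → ∀ ω, ω ∈ A t → ω ∈ A t' → False := by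
      intro t t' htt' ω h h'
      exact h'.1 t htt' h.2.1
    intro t t' hne
    rw [Function.onFun, Set.disjoint_left]
    intro ω hω hω'
    rcases lt_or_gt_of_ne hne with h | h
    · exact key t t' h ω hω hω'
    · exact key t' t h ω hω' hω
  -- the total event
  have hE : {ω | ∃ t, (∀ s < t, X s ω ≠ b) ∧ X t ω = b ∧
      ((Finset.range t).filter (fun s => X s ω = i)).card = m} = ⋃ t, A t := by
    ext ω; simp only [Set.mem_setOf_eq, Set.mem_iUnion, hAdef]
  rw [hE, measure_iUnion hdisjA hAmeas, tsum_congr hmuA]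
  -- convert to real sum
  set f : ℕ → ℝ := fun t => (t.choose m : ℝ) * (ri ^ m * q ^ (t - m) * rb) with hfdef
  have hfnn : ∀ t, 0 ≤ f t := by
    intro t; rw [hfdef]; positivity
  have hinj : Function.Injective (fun k : ℕ => m + k) := add_right_injective m
  have hf0 : ∀ t ∉ Set.range (fun k : ℕ => m + k), f t = 0 := by
    intro t ht
    have hlt : t < m := by
      by_contra h
      exact ht ⟨t - m, show m + (t - m) = t by omega⟩
    rw [hfdef]
    simp [Nat.choose_eq_zero_of_lt hlt]
  have hcomp : (fun k => f (m + k))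
      = fun k => (ri ^ m * rb) * (((k + m).choose m : ℝ) * q ^ k) := by
    funext k
    simp only [hfdef]
    rw [show m + k - m = k from by omega, show m + k = k + m from by omega]
    ring
  have hqnorm : ‖q‖ < 1 := by rwa [Real.norm_eq_abs, abs_of_nonneg hq0]
  have hsumg : Summable (fun k => f (m + k)) := by
    rw [hcomp]
    exact (summable_choose_mul_geometric_of_norm_lt_one m hqnorm).mul_left _
  have hsumf : Summable f :=
    (Function.Injective.summable_iff hinj hf0).mp hsumg
  rw [← ENNReal.ofReal_tsum_of_nonneg hfnn hsumf]
  congr 1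
  have hsupp : Function.support f ⊆ Set.range (fun k : ℕ => m + k) := by
    intro t ht
    by_contra hr
    exact ht (hf0 t hr)
  have htsum : ∑' t, f t = ∑' k, f (m + k) := (hinj.tsum_eq hsupp).symm
  rw [htsum, hcomp, tsum_mul_left, tsum_choose_mul_geometric_of_norm_lt_one m hqnorm]
  have h1q : 1 - q = ri + rb := by rw [hqdef]; ring
  rw [h1q, hridef, hrbdef, ← add_div]
  have hZne : Z ≠ 0 := hZpos.ne'
  have hib0 : θ i + θ b ≠ 0 := by
    have := hθ i; have := hθ b; linarith
  rw [div_pow, div_pow, div_pow, pow_succ]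
  field_simp
  ring
end

section
/- Concentration of a sum of geometric random variables via the negative binomial: if X₁,…,X_d are i.i.d. geometric random variables with success parameter θ_b/(θ_b+θ_i) (counting failures before success) and Z = Σ X_i, then for any η > 0, Pr(|Z/d - θ_i/θ_b| ≥ η) < 2·exp( -2dη² / ((1+θ_i/θ_b)²(η + 1 + θ_i/θ_b)) ). -/
open MeasureTheory ProbabilityTheory

section AuxLemmas
open Real

lemma geom_mgf {Ω : Type*} [MeasurableSpace Ω] (μ : Measure Ω) [IsProbabilityMeasure μ]
    (q p : ℝ) (hq0 : 0 ≤ q) (hp0 : 0 ≤ p)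
    (X : Ω → ℕ) (hX : Measurable X)
    (hlaw : ∀ n, μ {ω | X ω = n} = ENNReal.ofReal (q ^ n * p))
    (t : ℝ) (h1 : q * Real.exp t < 1) :
    Integrable (fun ω => Real.exp (t * (X ω : ℝ))) μ ∧
      mgf (fun ω => (X ω : ℝ)) μ t = p / (1 - q * Real.exp t) := by
  have hqe0 : 0 ≤ q * Real.exp t := mul_nonneg hq0 (Real.exp_pos t).le
  set g : ℕ → ℝ := fun n => Real.exp (t * n) with hg
  have hgn : ∀ n, g n = (q * Real.exp t) ^ n * p / (q ^ n * p) ∨ True := fun n => Or.inr trivial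
  have hge : ∀ n : ℕ, g n = Real.exp t ^ n := by
    intro n; simp only [hg]; rw [mul_comm, Real.exp_nat_mul]
  set ν : Measure ℕ := μ.map X with hν
  have hνn : ∀ n, ν {n} = ENNReal.ofReal (q ^ n * p) := by
    intro n
    rw [hν, Measure.map_apply hX (measurableSet_singleton n)]
    convert hlaw n using 2
    rfl
  have hsumm : Summable (fun n : ℕ => (q * Real.exp t) ^ n * p) :=
    (summable_geometric_of_lt_one hqe0 h1).mul_right p
  have hterm : ∀ n : ℕ, (q ^ n * p) * g n = (q * Real.exp t) ^ n * p := by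
    intro n; rw [hge n]; ring
  have hint : Integrable g ν := by
    refine ⟨measurable_from_nat.aestronglyMeasurable, ?_⟩
    show (∫⁻ n, ‖g n‖₊ ∂ν) < ⊤
    rw [lintegral_countable']
    have : ∀ n : ℕ, (‖g n‖₊ : ENNReal) * ν {n} = ENNReal.ofReal ((q * Real.exp t) ^ n * p) := by
      intro n
      rw [hνn n, ← enorm_eq_nnnorm, ← ofReal_norm, ← ENNReal.ofReal_mul (norm_nonneg _)]
      congr 1
      rw [Real.norm_of_nonneg (by rw [hge]; positivity), ← hterm n]; ring
    rw [tsum_congr this, ← ENNReal.ofReal_tsum_of_nonneg (fun n => by positivity) hsumm]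
    exact ENNReal.ofReal_lt_top
  have hcomp : (fun ω => Real.exp (t * (X ω : ℝ))) = g ∘ X := rfl
  have hint2 : Integrable (fun ω => Real.exp (t * (X ω : ℝ))) μ := by
    rw [hcomp]
    exact (integrable_map_measure measurable_from_nat.aestronglyMeasurable
      hX.aemeasurable).mp hint
  refine ⟨hint2, ?_⟩
  have : mgf (fun ω => (X ω : ℝ)) μ t = ∫ n, g n ∂ν := by
    rw [mgf, hν, integral_map hX.aemeasurable measurable_from_nat.aestronglyMeasurable]
  rw [this, integral_countable' hint]
  have h2 : ∀ n : ℕ, ν.real {n} • g n = (q * Real.exp t) ^ n * p := by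
    intro n
    rw [measureReal_def, hνn n, smul_eq_mul, ENNReal.toReal_ofReal (by positivity), hterm n]
  rw [tsum_congr h2, tsum_mul_right, tsum_geometric_of_lt_one hqe0 h1,
    div_eq_mul_inv, mul_comm]

lemma klog_strict {s : ℝ} (h0 : 0 < s) (h1 : s < 1) :
    s + s^2/2 < -Real.log (1-s) := by
  set f : ℝ → ℝ := fun x => -Real.log (1-x) - x - x^2/2 with hf
  have hder : ∀ x : ℝ, x < 1 → HasDerivAt f ((1-x)⁻¹ - 1 - x) x := by
    intro x hx
    have hx1 : (1:ℝ) - x ≠ 0 := by intro h; linarith [h]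
    have h1 : HasDerivAt (fun y : ℝ => 1 - y) (-1) x := by
      simpa using (hasDerivAt_id x).const_sub 1
    have h2 : HasDerivAt (fun y : ℝ => Real.log (1-y)) ((1-x)⁻¹ * (-1)) x :=
      (Real.hasDerivAt_log hx1).comp x h1
    have h3 : HasDerivAt (fun y : ℝ => y^2/2) x x := by
      simpa using (hasDerivAt_pow 2 x).div_const 2
    have := ((h2.neg).sub (hasDerivAt_id x)).sub h3
    refine this.congr_deriv ?_
    ring
  have hmono : StrictMonoOn f (Set.Ico (0:ℝ) 1) := by
    apply strictMonoOn_of_deriv_pos (convex_Ico 0 1)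
    · exact fun x hx => ((hder x hx.2).continuousAt).continuousWithinAt
    · intro x hx
      rw [interior_Ico] at hx
      rw [(hder x hx.2).deriv]
      have hx1 : 0 < 1 - x := by linarith [hx.2]
      have hinv : (1-x) * (1-x)⁻¹ = 1 := mul_inv_cancel₀ (ne_of_gt hx1)
      nlinarith [mul_pos (mul_pos hx.1 hx.1) (inv_pos.2 hx1), hx.1, hx.2]
  have h00 : f 0 = 0 := by simp [hf]
  have := hmono (Set.mem_Ico.2 ⟨le_refl 0, one_pos⟩) (Set.mem_Ico.2 ⟨h0.le, h1⟩) h0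
  rw [h00] at this
  simp only [hf] at this
  linarith

lemma log_one_add_ineq {m : ℝ} (hm : 0 < m) :
    2*m^2 < (1+m)^2*(1+2*m)*Real.log (1+m) := by
  have h1m : (0:ℝ) < 1 + m := by linarith
  set s : ℝ := m/(1+m) with hs
  have hs0 : 0 < s := div_pos hm h1m
  have hs1 : s < 1 := (div_lt_one h1m).2 (by linarith)
  have h1s : 1 - s = (1+m)⁻¹ := by rw [hs]; field_simp; ring
  have hlog : -Real.log (1-s) = Real.log (1+m) := by
    rw [h1s, Real.log_inv]; ring
  have hkey := klog_strict hs0 hs1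
  rw [hlog] at hkey
  have hse : s * (1+m) = m := by rw [hs]; field_simp
  have hs2 : s^2 * (1+m)^2 = m^2 := by rw [← mul_pow, hse]
  have hpos : (0:ℝ) < (1+m)^2*(1+2*m) := by positivity
  have := mul_lt_mul_of_pos_left hkey hpos
  nlinarith [this, hse, hs2, hm, mul_pos hm hm]

set_option maxHeartbeats 1000000 in
lemma upper_rate {m η : ℝ} (hm : 0 < m) (hη : 0 < η) :
    2*η^2 < (1+m)^2*(1+(m+η)) *
      ((m+η)*(Real.log (m+η) - Real.log m)
        - (1+(m+η))*(Real.log (1+(m+η)) - Real.log (1+m))) := by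
  set J : ℝ → ℝ := fun a => a*(Real.log a - Real.log m)
      - (1+a)*(Real.log (1+a) - Real.log (1+m)) with hJ
  set J' : ℝ → ℝ := fun a => (Real.log a - Real.log m)
      - (Real.log (1+a) - Real.log (1+m)) with hJ'
  have hJd : ∀ a : ℝ, 0 < a → HasDerivAt J (J' a) a := by
    intro a ha
    have h1a : (0:ℝ) < 1 + a := by linarith
    have hL : HasDerivAt (fun a : ℝ => Real.log a - Real.log m) a⁻¹ a :=
      (Real.hasDerivAt_log (ne_of_gt ha)).sub_const _
    have hL2 : HasDerivAt (fun a : ℝ => Real.log (1+a) - Real.log (1+m)) (1+a)⁻¹ a := by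
      have h0 : HasDerivAt (fun a : ℝ => 1 + a) 1 a := (hasDerivAt_id a).const_add 1
      have := ((Real.hasDerivAt_log (ne_of_gt h1a)).comp a h0).sub_const (Real.log (1+m))
      simpa using this
    have h0 : HasDerivAt (fun a : ℝ => 1 + a) 1 a := (hasDerivAt_id a).const_add 1
    have := ((hasDerivAt_id a).mul hL).sub (h0.mul hL2)
    refine this.congr_deriv ?_
    simp only [hJ']
    field_simp
    rw [id_eq]; ring
  have hJ'd : ∀ a : ℝ, 0 < a → HasDerivAt J' (a⁻¹ - (1+a)⁻¹) a := by
    intro a ha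
    have h1a : (0:ℝ) < 1 + a := by linarith
    have hL : HasDerivAt (fun a : ℝ => Real.log a - Real.log m) a⁻¹ a :=
      (Real.hasDerivAt_log (ne_of_gt ha)).sub_const _
    have hL2 : HasDerivAt (fun a : ℝ => Real.log (1+a) - Real.log (1+m)) (1+a)⁻¹ a := by
      have h0 : HasDerivAt (fun a : ℝ => 1 + a) 1 a := (hasDerivAt_id a).const_add 1
      have := ((Real.hasDerivAt_log (ne_of_gt h1a)).comp a h0).sub_const (Real.log (1+m))
      simpa using this
    exact hL.sub hL2
  set F : ℝ → ℝ := fun a => (1+m)^2*((1+a)*J a) - 2*(a-m)^2 with hF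
  set F1 : ℝ → ℝ := fun a => (1+m)^2*(J a + (1+a)*J' a) - 4*(a-m) with hF1
  set F2 : ℝ → ℝ := fun a => (1+m)^2*(2*J' a + a⁻¹) - 4 with hF2
  set F3 : ℝ → ℝ := fun a => (1+m)^2*((a-1)/(a^2*(1+a))) with hF3
  have hFd : ∀ a : ℝ, 0 < a → HasDerivAt F (F1 a) a := by
    intro a ha
    have h0 : HasDerivAt (fun a : ℝ => 1 + a) 1 a := (hasDerivAt_id a).const_add 1
    have hsq : HasDerivAt (fun a : ℝ => (a-m)^2) ((2:ℕ) * (a-m)^1 * 1) a :=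
      ((hasDerivAt_id a).sub_const m).pow 2
    have hder := ((h0.mul (hJd a ha)).const_mul ((1+m)^2)).sub (hsq.const_mul 2)
    have heq : (1+m)^2 * (1 * J a + (1+a) * J' a) - 2 * ((2:ℕ) * (a-m)^1 * 1) = F1 a := by
      simp only [hF1]; push_cast; ring
    exact heq ▸ hder
  have hF1d : ∀ a : ℝ, 0 < a → HasDerivAt F1 (F2 a) a := by
    intro a ha
    have h1a : (0:ℝ) < 1 + a := by linarith
    have h0 : HasDerivAt (fun a : ℝ => 1 + a) 1 a := (hasDerivAt_id a).const_add 1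
    have hlin : HasDerivAt (fun a : ℝ => (a-m)) 1 a := (hasDerivAt_id a).sub_const m
    have hder := (((hJd a ha).add (h0.mul (hJ'd a ha))).const_mul ((1+m)^2)).sub
      (hlin.const_mul 4)
    have heq : (1+m)^2 * (J' a + (1 * J' a + (1+a) * (a⁻¹ - (1+a)⁻¹))) - 4 * 1 = F2 a := by
      simp only [hF2]; field_simp; ring
    exact heq ▸ hder
  have hF2d : ∀ a : ℝ, 0 < a → HasDerivAt F2 (F3 a) a := by
    intro a ha
    have h1a : (0:ℝ) < 1 + a := by linarith
    have hinv : HasDerivAt (fun a : ℝ => a⁻¹) (-(a^2)⁻¹) a := by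
      simpa using hasDerivAt_inv (ne_of_gt ha)
    have hder := ((((hJ'd a ha).const_mul 2).add hinv).const_mul ((1+m)^2)).sub_const 4
    have heq : (1+m)^2 * (2 * (a⁻¹ - (1+a)⁻¹) + -(a^2)⁻¹) = F3 a := by
      simp only [hF3]; field_simp; ring
    exact heq ▸ hder
  have h4m : (4:ℝ) ≤ (1+m)^2 * m⁻¹ := by
    have h1 : 4*m ≤ (1+m)^2 := by nlinarith [sq_nonneg (1-m)]
    have h2 := mul_le_mul_of_nonneg_right h1 (le_of_lt (inv_pos.2 hm))
    rwa [mul_assoc, mul_inv_cancel₀ (ne_of_gt hm), mul_one] at h2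
  -- F2 is positive on (m, ∞)
  have hC2 : ∀ a : ℝ, m < a → 0 < F2 a := by
    have hF2m : F2 m = (1+m)^2 * m⁻¹ - 4 := by
      simp only [hF2, hJ', sub_self, zero_sub, neg_sub, sub_zero, mul_zero, zero_add]
      all_goals ring_nf
    rcases le_or_gt 1 m with h1m | h1m
    · -- m ≥ 1 : F2 strictly increasing on [m, ∞)
      intro a ha
      have hmono : StrictMonoOn F2 (Set.Ici m) := by
        apply strictMonoOn_of_deriv_pos (convex_Ici m)
        · exact fun x hx => ((hF2d x (lt_of_lt_of_le hm hx)).continuousAt).continuousWithinAt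
        · intro x hx
          rw [interior_Ici] at hx
          have hx0 : 0 < x := lt_trans hm hx
          rw [(hF2d x hx0).deriv]
          have hx1 : 0 < x - 1 := by linarith [lt_of_le_of_lt h1m hx]
          have : 0 < (x-1)/(x^2*(1+x)) := div_pos hx1 (by positivity)
          simp only [hF3]
          positivity
      have h6 := hmono (Set.mem_Ici.2 (le_refl m)) (Set.mem_Ici.2 ha.le) ha
      rw [hF2m] at h6
      exact lt_of_le_of_lt (by linarith [h4m]) h6
    · -- m < 1
      have hF21 : 0 < F2 1 := by
        have h1m' : (0:ℝ) < 1 + m := by linarith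
        set s : ℝ := (1-m)/(1+m) with hs
        have hs0 : 0 < s := div_pos (by linarith) h1m'
        have hs1 : s < 1 := (div_lt_one h1m').2 (by linarith)
        have h1s : 1 - s = 2*m/(1+m) := by rw [hs]; field_simp; ring
        have hlog : Real.log (1-s) = Real.log 2 + Real.log m - Real.log (1+m) := by
          rw [h1s, div_eq_mul_inv, Real.log_mul (by positivity) (by positivity),
            Real.log_mul two_ne_zero (ne_of_gt hm), Real.log_inv]
          ring
        have hkey := klog_strict hs0 hs1
        rw [hlog] at hkey
        have hse : s * (1+m) = 1 - m := by rw [hs]; field_simp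
        have hs2 : s^2 * (1+m)^2 = (1-m)^2 := by rw [← mul_pow, hse]
        have hid : (1+m)^2*(2*s + s^2 + 1) = 4 := by nlinarith [hse, hs2]
        have hF21e : F2 1 = (1+m)^2*(2*(Real.log (1+m) - Real.log 2 - Real.log m) + 1) - 4 := by
          simp only [hF2, hJ', Real.log_one]
          all_goals ring_nf
        rw [hF21e]
        have hpos : (0:ℝ) < (1+m)^2 := by positivity
        nlinarith [mul_lt_mul_of_pos_left hkey hpos]
      have hanti : AntitoneOn F2 (Set.Icc m 1) := by
        apply antitoneOn_of_deriv_nonpos (convex_Icc m 1)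
        · exact fun x hx => ((hF2d x (lt_of_lt_of_le hm hx.1)).continuousAt).continuousWithinAt
        · intro x hx
          rw [interior_Icc] at hx
          exact ((hF2d x (lt_trans hm hx.1)).differentiableAt).differentiableWithinAt
        · intro x hx
          rw [interior_Icc] at hx
          have hx0 : 0 < x := lt_trans hm hx.1
          rw [(hF2d x hx0).deriv]
          simp only [hF3]
          have h5 : (x-1)/(x^2*(1+x)) ≤ 0 :=
            div_nonpos_of_nonpos_of_nonneg (by linarith [hx.2]) (by positivity)
          nlinarith [sq_nonneg (1+m), h5]
      have hmono : MonotoneOn F2 (Set.Ici 1) := by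
        apply monotoneOn_of_deriv_nonneg (convex_Ici 1)
        · exact fun x hx => ((hF2d x (lt_of_lt_of_le one_pos hx)).continuousAt).continuousWithinAt
        · intro x hx
          rw [interior_Ici] at hx
          exact ((hF2d x (lt_trans one_pos hx)).differentiableAt).differentiableWithinAt
        · intro x hx
          rw [interior_Ici] at hx
          have hx0 : (0:ℝ) < x := lt_trans one_pos hx
          rw [(hF2d x hx0).deriv]
          simp only [hF3]
          have hx1 : (1:ℝ) < x := hx
          have : 0 ≤ (x-1)/(x^2*(1+x)) :=
            div_nonneg (by linarith) (by positivity)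
          positivity
      intro a ha
      rcases le_total a 1 with hle | hle
      · have h := hanti (Set.mem_Icc.2 ⟨ha.le, hle⟩) (Set.mem_Icc.2 ⟨h1m.le, le_refl 1⟩) hle
        linarith
      · have h := hmono (Set.mem_Ici.2 (le_refl 1)) (Set.mem_Ici.2 hle) hle
        linarith
  -- F1 positive on (m, ∞)
  have hF1m : F1 m = 0 := by
    simp only [hF1, hJ, hJ', sub_self, mul_zero, zero_mul, zero_sub, sub_zero, zero_add]
    all_goals ring
  have hC1 : ∀ a : ℝ, m < a → 0 < F1 a := by
    intro a ha
    have hmono : StrictMonoOn F1 (Set.Ici m) := by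
      apply strictMonoOn_of_deriv_pos (convex_Ici m)
      · exact fun x hx => ((hF1d x (lt_of_lt_of_le hm hx)).continuousAt).continuousWithinAt
      · intro x hx
        rw [interior_Ici] at hx
        rw [(hF1d x (lt_trans hm hx)).deriv]
        exact hC2 x hx
    have := hmono (Set.mem_Ici.2 (le_refl m)) (Set.mem_Ici.2 ha.le) ha
    rwa [hF1m] at this
  -- F positive on (m, ∞)
  have hFm : F m = 0 := by
    simp only [hF, hJ, sub_self, mul_zero, zero_mul, sub_zero]
    all_goals ring
  have hC0 : 0 < F (m+η) := by
    have hmono : StrictMonoOn F (Set.Ici m) := by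
      apply strictMonoOn_of_deriv_pos (convex_Ici m)
      · exact fun x hx => ((hFd x (lt_of_lt_of_le hm hx)).continuousAt).continuousWithinAt
      · intro x hx
        rw [interior_Ici] at hx
        rw [(hFd x (lt_trans hm hx)).deriv]
        exact hC1 x hx
    have := hmono (Set.mem_Ici.2 (le_refl m))
      (Set.mem_Ici.2 (show m ≤ m + η by linarith)) (show m < m + η by linarith)
    rwa [hFm] at this
  simp only [hF, hJ] at hC0
  have he : m + η - m = η := by ring
  rw [he] at hC0
  nlinarith [hC0]

set_option maxHeartbeats 1000000 in
lemma lower_rate {m η : ℝ} (hm : 0 < m) (hη : 0 < η) (hηm : η < m) :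
    2*η^2 < (1+m)^2*(1+m+η) *
      ((m-η)*(Real.log (m-η) - Real.log m)
        - (1+(m-η))*(Real.log (1+(m-η)) - Real.log (1+m))) := by
  set J : ℝ → ℝ := fun x => x*(Real.log x - Real.log m)
      - (1+x)*(Real.log (1+x) - Real.log (1+m)) with hJ
  set J' : ℝ → ℝ := fun x => (Real.log x - Real.log m)
      - (Real.log (1+x) - Real.log (1+m)) with hJ'
  have hJd : ∀ x : ℝ, 0 < x → HasDerivAt J (J' x) x := by
    intro x hx
    have h1x : (0:ℝ) < 1 + x := by linarith
    have hL : HasDerivAt (fun x : ℝ => Real.log x - Real.log m) x⁻¹ x :=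
      (Real.hasDerivAt_log (ne_of_gt hx)).sub_const _
    have hL2 : HasDerivAt (fun x : ℝ => Real.log (1+x) - Real.log (1+m)) (1+x)⁻¹ x := by
      have h0 : HasDerivAt (fun x : ℝ => 1 + x) 1 x := (hasDerivAt_id x).const_add 1
      have := ((Real.hasDerivAt_log (ne_of_gt h1x)).comp x h0).sub_const (Real.log (1+m))
      simpa using this
    have h0 : HasDerivAt (fun x : ℝ => 1 + x) 1 x := (hasDerivAt_id x).const_add 1
    have := ((hasDerivAt_id x).mul hL).sub (h0.mul hL2)
    refine this.congr_deriv ?_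
    simp only [hJ']
    field_simp
    rw [id_eq]; ring
  have hJ'd : ∀ x : ℝ, 0 < x → HasDerivAt J' (x⁻¹ - (1+x)⁻¹) x := by
    intro x hx
    have h1x : (0:ℝ) < 1 + x := by linarith
    have hL : HasDerivAt (fun x : ℝ => Real.log x - Real.log m) x⁻¹ x :=
      (Real.hasDerivAt_log (ne_of_gt hx)).sub_const _
    have hL2 : HasDerivAt (fun x : ℝ => Real.log (1+x) - Real.log (1+m)) (1+x)⁻¹ x := by
      have h0 : HasDerivAt (fun x : ℝ => 1 + x) 1 x := (hasDerivAt_id x).const_add 1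
      have := ((Real.hasDerivAt_log (ne_of_gt h1x)).comp x h0).sub_const (Real.log (1+m))
      simpa using this
    exact hL.sub hL2
  set G : ℝ → ℝ := fun x => (1+m)^2*((1+2*m-x)*J x) - 2*(m-x)^2 with hG
  set G1 : ℝ → ℝ := fun x => (1+m)^2*((1+2*m-x)*J' x - J x) + 4*(m-x) with hG1
  set G2 : ℝ → ℝ := fun x => (1+m)^2*((1+2*m-x)*(x⁻¹-(1+x)⁻¹) - 2*J' x) - 4 with hG2
  have hGd : ∀ x : ℝ, 0 < x → HasDerivAt G (G1 x) x := by
    intro x hx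
    have h2m : HasDerivAt (fun x : ℝ => 1+2*m-x) (-1) x := by
      simpa using (hasDerivAt_id x).const_sub (1+2*m)
    have hsq : HasDerivAt (fun x : ℝ => (m-x)^2) ((2:ℕ) * (m-x)^1 * (-1)) x := by
      exact ((hasDerivAt_id x).const_sub m).pow 2
    have hder := ((h2m.mul (hJd x hx)).const_mul ((1+m)^2)).sub (hsq.const_mul 2)
    have heq : (1+m)^2 * (-1 * J x + (1+2*m-x) * J' x) - 2 * ((2:ℕ) * (m-x)^1 * (-1))
        = G1 x := by simp only [hG1]; push_cast; ring
    exact heq ▸ hder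
  have hG1d : ∀ x : ℝ, 0 < x → HasDerivAt G1 (G2 x) x := by
    intro x hx
    have h2m : HasDerivAt (fun x : ℝ => 1+2*m-x) (-1) x := by
      simpa using (hasDerivAt_id x).const_sub (1+2*m)
    have hlin : HasDerivAt (fun x : ℝ => 4*(m-x)) (4*(-1)) x :=
      ((hasDerivAt_id x).const_sub m).const_mul 4
    have hder := (((h2m.mul (hJ'd x hx)).sub (hJd x hx)).const_mul ((1+m)^2)).add hlin
    have heq : (1+m)^2 * ((-1 * J' x + (1+2*m-x) * (x⁻¹ - (1+x)⁻¹)) - J' x) + 4*(-1)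
        = G2 x := by simp only [hG2]; ring
    exact heq ▸ hder
  have hG2pos : ∀ x : ℝ, 0 < x → x < m → 0 < G2 x := by
    intro x hx hxm
    have h1x : (0:ℝ) < 1 + x := by linarith
    have h1m : (0:ℝ) < 1 + m := by linarith
    have hJ'np : J' x ≤ 0 := by
      have h1 : x*(1+m) ≤ m*(1+x) := by nlinarith
      have h2 : Real.log (x*(1+m)) ≤ Real.log (m*(1+x)) :=
        Real.log_le_log (by positivity) h1
      rw [Real.log_mul (ne_of_gt hx) (ne_of_gt h1m),
        Real.log_mul (ne_of_gt hm) (ne_of_gt h1x)] at h2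
      simp only [hJ']
      linarith
    have key : 4*(x*(1+x)) < (1+m)^2*(1+2*m-x) := by
      nlinarith [sq_nonneg (1-m), mul_pos (sub_pos.2 hxm) hm, sq_nonneg (m-x),
        mul_pos hx hm, sub_pos.2 hxm]
    have hfrac : (1+m)^2*((1+2*m-x)*(x⁻¹-(1+x)⁻¹))
        = (1+m)^2*(1+2*m-x)/(x*(1+x)) := by
      field_simp; ring
    have h4' : 4 < (1+m)^2*((1+2*m-x)*(x⁻¹-(1+x)⁻¹)) := by
      rw [hfrac]
      exact (lt_div_iff₀ (by positivity)).2 (by linarith [key])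
    have hnn : 0 ≤ 2*((1+m)^2*(-(J' x))) := by
      have := mul_nonneg (sq_nonneg (1+m)) (neg_nonneg.2 hJ'np)
      linarith
    have e1 : G2 x = (1+m)^2*((1+2*m-x)*(x⁻¹-(1+x)⁻¹)) + 2*((1+m)^2*(-(J' x))) - 4 := by
      simp only [hG2]; ring
    rw [e1]
    linarith
  have hG1m : G1 m = 0 := by
    simp only [hG1, hJ, hJ', sub_self, mul_zero, zero_mul, zero_sub, sub_zero, zero_add]
    all_goals ring
  have hGm : G m = 0 := by
    simp only [hG, hJ, sub_self, mul_zero, zero_mul, sub_zero]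
    all_goals ring
  set a : ℝ := m - η with ha
  have ha0 : 0 < a := by rw [ha]; linarith
  have ham : a < m := by rw [ha]; linarith
  have hG1neg : ∀ x : ℝ, a ≤ x → x < m → G1 x < 0 := by
    intro x hax hxm
    have hmono : StrictMonoOn G1 (Set.Icc a m) := by
      apply strictMonoOn_of_deriv_pos (convex_Icc a m)
      · exact fun y hy => ((hG1d y (lt_of_lt_of_le ha0 hy.1)).continuousAt).continuousWithinAt
      · intro y hy
        rw [interior_Icc] at hy
        rw [(hG1d y (lt_trans ha0 hy.1)).deriv]
        exact hG2pos y (lt_trans ha0 hy.1) hy.2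
    have := hmono (Set.mem_Icc.2 ⟨hax, hxm.le⟩) (Set.mem_Icc.2 ⟨ham.le, le_refl m⟩) hxm
    rwa [hG1m] at this
  have hC0 : 0 < G a := by
    have hanti : StrictAntiOn G (Set.Icc a m) := by
      apply strictAntiOn_of_deriv_neg (convex_Icc a m)
      · exact fun y hy => ((hGd y (lt_of_lt_of_le ha0 hy.1)).continuousAt).continuousWithinAt
      · intro y hy
        rw [interior_Icc] at hy
        rw [(hGd y (lt_trans ha0 hy.1)).deriv]
        exact hG1neg y hy.1.le hy.2
    have := hanti (Set.mem_Icc.2 ⟨le_refl a, ham.le⟩) (Set.mem_Icc.2 ⟨ham.le, le_refl m⟩) ham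
    rwa [hGm] at this
  simp only [hG, hJ] at hC0
  have h1 : 1+2*m-a = 1+m+η := by rw [ha]; ring
  have h2 : m - a = η := by rw [ha]; ring
  rw [h1, h2] at hC0
  nlinarith [hC0]

end AuxLemmas

set_option maxHeartbeats 1000000 in
/-- Concentration of a sum of i.i.d. geometric random variables (failures before
first success, parameter θ_b/(θ_b+θ_i)): with Z = Σ_{k=1}^d X_k, for any η > 0,
Pr(|Z/d - θ_i/θ_b| ≥ η) < 2·exp(-2dη² / ((1+θ_i/θ_b)²(η+1+θ_i/θ_b))). -/
theorem geometric_sum_concentration {Ω : Type*} [MeasurableSpace Ω]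
    (μ : Measure Ω) [IsProbabilityMeasure μ]
    (θi θb : ℝ) (hθi : 0 < θi) (hθb : 0 < θb)
    (d : ℕ) (hd : 0 < d) (X : Fin d → Ω → ℕ)
    (hmeas : ∀ k, Measurable (X k))
    (hindep : iIndepFun X μ)
    (hlaw : ∀ k m, μ {ω | X k ω = m}
      = ENNReal.ofReal ((θi / (θb + θi)) ^ m * (θb / (θb + θi))))
    (η : ℝ) (hη : 0 < η) :
    μ {ω | η ≤ |(∑ k, (X k ω : ℝ)) / d - θi / θb|}
      < ENNReal.ofReal (2 * Real.exp (-(2 * d * η ^ 2)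
          / ((1 + θi / θb) ^ 2 * (η + 1 + θi / θb)))) := by
  have hbi : (0:ℝ) < θb + θi := by linarith
  have hm : 0 < θi/θb := div_pos hθi hθb
  set m : ℝ := θi/θb with hmdef
  have h1m : (0:ℝ) < 1 + m := by linarith
  set q : ℝ := θi/(θb+θi) with hqdef
  set p : ℝ := θb/(θb+θi) with hpdef
  have hq0 : 0 ≤ q := by positivity
  have hqpos : 0 < q := by rw [hqdef]; positivity
  have hp0 : 0 ≤ p := by rw [hpdef]; positivity
  have hppos : 0 < p := by rw [hpdef]; positivity
  have hqm : q = m/(1+m) := by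
    rw [hqdef, hmdef]; field_simp
  have hpm : p = 1/(1+m) := by
    rw [hpdef, hmdef]; field_simp
  have hpq : p + q = 1 := by rw [hpdef, hqdef]; field_simp
  have hd0 : (0:ℝ) < (d:ℝ) := Nat.cast_pos.2 hd
  set Y : Fin d → Ω → ℝ := fun k ω => (X k ω : ℝ) with hY
  have hYmeas : ∀ k, Measurable (Y k) :=
    fun k => measurable_from_nat.comp (hmeas k)
  have hYindep : iIndepFun Y μ :=
    hindep.comp (fun _ => (Nat.cast : ℕ → ℝ)) (fun _ => measurable_from_nat)
  set S : Ω → ℝ := ∑ k, Y k with hSdef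
  have hSω : ∀ ω, S ω = ∑ k, (X k ω : ℝ) := by
    intro ω; rw [hSdef]; simp [hY]
  have hS0 : ∀ ω, 0 ≤ S ω := by
    intro ω; rw [hSω]; positivity
  have hlaw' : ∀ k n, μ {ω | X k ω = n} = ENNReal.ofReal (q ^ n * p) := by
    intro k n; rw [hqdef, hpdef]; exact hlaw k n
  -- mgf of the sum
  have main : ∀ t : ℝ, q * Real.exp t < 1 →
      Integrable (fun ω => Real.exp (t * S ω)) μ ∧
        mgf S μ t = (p/(1 - q*Real.exp t))^d := by
    intro t ht
    have hik : ∀ k, Integrable (fun ω => Real.exp (t * Y k ω)) μ := by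
      intro k
      exact (geom_mgf μ q p hq0 hp0 (X k) (hmeas k) (hlaw' k) t ht).1
    constructor
    · exact hYindep.integrable_exp_mul_sum hYmeas (fun k _ => hik k)
    · rw [hSdef, hYindep.mgf_sum hYmeas]
      have : ∀ k : Fin d, mgf (Y k) μ t = p/(1 - q*Real.exp t) := by
        intro k
        exact (geom_mgf μ q p hq0 hp0 (X k) (hmeas k) (hlaw' k) t ht).2
      rw [Finset.prod_congr rfl (fun k _ => this k), Finset.prod_const,
        Finset.card_univ, Fintype.card_fin]
  set B : ℝ := 2*η^2/((1+m)^2*(1+m+η)) with hB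
  have hKpos : (0:ℝ) < (1+m)^2*(1+m+η) := by positivity
  have hBpos : 0 < B := by rw [hB]; positivity
  -- generic Chernoff-at-optimal-t computation
  have chern : ∀ a : ℝ, 0 < a →
      Real.exp (-(Real.log (a*(1+m)/(m*(1+a)))) * ((d:ℝ)*a))
        * (p / (1 - q * Real.exp (Real.log (a*(1+m)/(m*(1+a))))))^d
      = Real.exp (-((d:ℝ) * (a*(Real.log a - Real.log m)
          - (1+a)*(Real.log (1+a) - Real.log (1+m))))) := by
    intro a ha
    have h1a : (0:ℝ) < 1 + a := by linarith
    have hexp : Real.exp (Real.log (a*(1+m)/(m*(1+a)))) = a*(1+m)/(m*(1+a)) :=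
      Real.exp_log (by positivity)
    have hqe : q * Real.exp (Real.log (a*(1+m)/(m*(1+a)))) = a/(1+a) := by
      rw [hexp, hqm]; field_simp
    have hmgfX : p / (1 - q * Real.exp (Real.log (a*(1+m)/(m*(1+a))))) = (1+a)/(1+m) := by
      rw [hqe, hpm]
      have : 1 - a/(1+a) = 1/(1+a) := by field_simp; ring
      rw [this]
      field_simp
    rw [hmgfX]
    have hbase : (0:ℝ) < (1+a)/(1+m) := by positivity
    rw [← Real.exp_log hbase, ← Real.exp_nat_mul, ← Real.exp_add]
    congr 1
    have hlt : Real.log (a*(1+m)/(m*(1+a)))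
        = Real.log a + Real.log (1+m) - (Real.log m + Real.log (1+a)) := by
      rw [Real.log_div (by positivity) (by positivity),
        Real.log_mul (ne_of_gt ha) (ne_of_gt h1m),
        Real.log_mul (ne_of_gt hm) (ne_of_gt h1a)]
    have hlb : Real.log ((1+a)/(1+m)) = Real.log (1+a) - Real.log (1+m) :=
      Real.log_div (ne_of_gt h1a) (ne_of_gt h1m)
    rw [hlt, hlb]
    ring
  -- upper tail
  have hup : (μ {ω | (d:ℝ)*(m+η) ≤ S ω}).toReal < Real.exp (-((d:ℝ)*B)) := by
    set A : ℝ := m + η with hA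
    have hA0 : (0:ℝ) < A := by rw [hA]; linarith
    have h1A : (0:ℝ) < 1 + A := by linarith
    set t : ℝ := Real.log (A*(1+m)/(m*(1+A))) with ht
    have hexp : Real.exp t = A*(1+m)/(m*(1+A)) := Real.exp_log (by positivity)
    have hqe : q * Real.exp t = A/(1+A) := by rw [hexp, hqm]; field_simp
    have hqe1 : q * Real.exp t < 1 := by
      rw [hqe, div_lt_one h1A]; linarith
    have ht0 : 0 ≤ t := by
      rw [ht]
      apply Real.log_nonneg
      rw [le_div_iff₀ (by positivity)]
      nlinarith [hA, hη]
    obtain ⟨hint, hmgf⟩ := main t hqe1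
    have hch := measure_ge_le_exp_mul_mgf ((d:ℝ)*A) ht0 hint
    rw [hmgf, chern A hA0] at hch
    refine lt_of_le_of_lt hch ?_
    apply Real.exp_lt_exp.2
    have hJ := upper_rate hm hη
    rw [← hA] at hJ
    have h1A' : (1+(m+η)) = 1 + A := by rw [hA]
    have hJB : B < A*(Real.log A - Real.log m) - (1+A)*(Real.log (1+A) - Real.log (1+m)) := by
      rw [hB, div_lt_iff₀ hKpos]
      have he : (1+m)^2*(1+m+η) = (1+m)^2*(1+(m+η)) := by ring
      rw [he]
      nlinarith [hJ]
    nlinarith [mul_lt_mul_of_pos_left hJB hd0]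
  -- lower tail
  have hlow : (μ {ω | S ω ≤ (d:ℝ)*(m-η)}).toReal < Real.exp (-((d:ℝ)*B)) := by
    rcases lt_trichotomy η m with hηm | hηm | hηm
    · -- η < m : Chernoff at the optimal point
      set a : ℝ := m - η with ha
      have ha0 : (0:ℝ) < a := by rw [ha]; linarith
      have h1a : (0:ℝ) < 1 + a := by linarith
      set t : ℝ := Real.log (a*(1+m)/(m*(1+a))) with ht
      have hqe : q * Real.exp t = a/(1+a) := by
        rw [ht, Real.exp_log (by positivity), hqm]; field_simp
      have hqe1 : q * Real.exp t < 1 := by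
        rw [hqe, div_lt_one h1a]; linarith
      have ht0 : t ≤ 0 := by
        rw [ht]
        apply Real.log_nonpos (by positivity)
        rw [div_le_one (by positivity)]
        nlinarith [hηm, hη]
      obtain ⟨hint, hmgf⟩ := main t hqe1
      have hch := measure_le_le_exp_mul_mgf ((d:ℝ)*a) ht0 hint
      rw [hmgf, chern a ha0] at hch
      refine lt_of_le_of_lt hch ?_
      apply Real.exp_lt_exp.2
      have hJ := lower_rate hm hη hηm
      have hma : m - η = a := rfl
      rw [hma] at hJ
      have hJB : B < a*(Real.log a - Real.log m) - (1+a)*(Real.log (1+a) - Real.log (1+m)) := by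
        rw [hB, div_lt_iff₀ hKpos]
        nlinarith [hJ]
      nlinarith [mul_lt_mul_of_pos_left hJB hd0]
    · -- η = m : explicit small t
      have hBlog : B < Real.log (1+m) := by
        have hlog := log_one_add_ineq hm
        have hBm : B = 2*m^2/((1+m)^2*(1+2*m)) := by
          rw [hB, hηm]
          have he : (1+m)^2*(1+m+m) = (1+m)^2*(1+2*m) := by ring
          rw [he]
        have hKp : (0:ℝ) < (1+m)^2*(1+2*m) := by positivity
        rw [hBm, div_lt_iff₀ hKp]
        nlinarith [hlog]
      set D : ℝ := 1 - p * Real.exp B with hD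
      have hpeB : p * Real.exp B < 1 := by
        have h1 : Real.exp B < 1 + m := by
          calc Real.exp B < Real.exp (Real.log (1+m)) := Real.exp_lt_exp.2 hBlog
          _ = 1 + m := Real.exp_log h1m
        rw [hpm]
        rw [div_mul_eq_mul_div, div_lt_one h1m, one_mul]
        exact h1
      have hD0 : 0 < D := by rw [hD]; linarith
      have hDq : D < q := by
        have h2 : (1:ℝ) < Real.exp B := by
          rw [← Real.exp_zero]
          exact Real.exp_lt_exp.2 hBpos
        have h3 : p < p * Real.exp B := by nlinarith [hppos]
        rw [hD]; linarith [hpq]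
      set t : ℝ := Real.log (D/(2*q)) with ht
      have hexp : Real.exp t = D/(2*q) := Real.exp_log (by positivity)
      have hqe : q * Real.exp t = D/2 := by
        rw [hexp]; field_simp
      have hpeB0 : 0 < p * Real.exp B := by positivity
      have hqe1 : q * Real.exp t < 1 := by rw [hqe, hD]; linarith
      have ht0 : t ≤ 0 := by
        rw [ht]
        apply Real.log_nonpos (by positivity)
        rw [div_le_one (by positivity)]
        linarith [hqpos]
      obtain ⟨hint, hmgf⟩ := main t hqe1
      have hch := measure_le_le_exp_mul_mgf ((d:ℝ)*(m-η)) ht0 hint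
      rw [hmgf, hqe] at hch
      have hz : m - η = 0 := by rw [← hηm]; ring
      rw [hz, mul_zero, mul_zero, Real.exp_zero, one_mul] at hch
      rw [show (d:ℝ)*(m-η) = 0 by rw [hz, mul_zero]]
      refine lt_of_le_of_lt hch ?_
      have hhalf : 0 < 1 - D/2 := by rw [hD]; linarith
      have h7 : p / (1 - D/2) < Real.exp (-B) := by
        rw [div_lt_iff₀ hhalf]
        have hBB : Real.exp B * Real.exp (-B) = 1 := by
          rw [← Real.exp_add]; simp
        have h5 : p * Real.exp B < 1 - D/2 := by rw [hD]; linarith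
        calc p = (p * Real.exp B) * Real.exp (-B) := by
                rw [mul_assoc, hBB, mul_one]
        _ < (1 - D/2) * Real.exp (-B) :=
                mul_lt_mul_of_pos_right h5 (Real.exp_pos _)
        _ = Real.exp (-B) * (1 - D/2) := by ring
      calc (p/(1-D/2))^d < (Real.exp (-B))^d := by
              apply pow_lt_pow_left₀ h7 (by positivity) hd.ne'
      _ = Real.exp (-((d:ℝ)*B)) := by
              rw [← Real.exp_nat_mul]; congr 1; ring
    · -- η > m : the event is empty
      have hempty : {ω | S ω ≤ (d:ℝ)*(m-η)} = ∅ := by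
        ext ω
        simp only [Set.mem_setOf_eq, Set.mem_empty_iff_false, iff_false, not_le]
        have : (d:ℝ)*(m-η) < 0 := mul_neg_of_pos_of_neg hd0 (by linarith)
        linarith [hS0 ω]
      rw [hempty]
      simp only [measure_empty, ENNReal.toReal_zero]
      exact Real.exp_pos _
  -- combine
  have hsub : {ω | η ≤ |(∑ k, (X k ω : ℝ)) / d - m|}
      ⊆ {ω | (d:ℝ)*(m+η) ≤ S ω} ∪ {ω | S ω ≤ (d:ℝ)*(m-η)} := by
    intro ω hω
    have hω' : η ≤ |S ω / d - m| := by rwa [hSω ω]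
    rcases le_abs.1 hω' with h | h
    · left
      have h1 : m + η ≤ S ω / d := by linarith
      have := (le_div_iff₀ hd0).1 h1
      simp only [Set.mem_setOf_eq]
      linarith
    · right
      have h1 : S ω / d ≤ m - η := by linarith
      have := (div_le_iff₀ hd0).1 h1
      simp only [Set.mem_setOf_eq]
      linarith
  have hEfin : μ {ω | η ≤ |(∑ k, (X k ω : ℝ)) / d - m|} ≠ ⊤ := measure_ne_top μ _
  rw [ENNReal.lt_ofReal_iff_toReal_lt hEfin]
  have hE1 : μ {ω | η ≤ |(∑ k, (X k ω : ℝ)) / d - m|}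
      ≤ μ {ω | (d:ℝ)*(m+η) ≤ S ω} + μ {ω | S ω ≤ (d:ℝ)*(m-η)} :=
    le_trans (measure_mono hsub) (measure_union_le _ _)
  have hE2 : (μ {ω | η ≤ |(∑ k, (X k ω : ℝ)) / d - m|}).toReal
      ≤ (μ {ω | (d:ℝ)*(m+η) ≤ S ω}).toReal + (μ {ω | S ω ≤ (d:ℝ)*(m-η)}).toReal := by
    have h2 := ENNReal.toReal_mono
      (ENNReal.add_ne_top.2 ⟨measure_ne_top _ _, measure_ne_top _ _⟩) hE1
    rwa [ENNReal.toReal_add (measure_ne_top _ _) (measure_ne_top _ _)] at h2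
  have hfin : -(2 * (d:ℝ) * η ^ 2) / ((1 + m) ^ 2 * (η + 1 + m)) = -((d:ℝ)*B) := by
    rw [hB]
    have hKne : ((1+m)^2*(1+m+η)) ≠ 0 := ne_of_gt hKpos
    field_simp
    ring
  rw [hfin]
  linarith [hup, hlow, hE2]
end

section
/- The upper-tail deviation of a negative binomial via binomial Hoeffding: for Z ∼ NB(n, p) with p = θ_b/(θ_b+θ_i) and μ = θ_i/θ_b, and any η > 0, Pr(Z/n - μ > η) ≤ exp( -2nη² / ((1+μ)²(η+1+μ)) ), using the duality Pr(Z > m) = Pr(Bin(m+n, p) < n). -/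
open MeasureTheory Real Finset


lemma hoeffding_two_point (p : ℝ) (hp0 : 0 < p) (hp1 : p < 1) (t : ℝ) :
    1 - p + p * Real.exp t ≤ Real.exp (p * t + t ^ 2 / 8) := by
  set D : ℝ → ℝ := fun t => 1 - p + p * Real.exp t with hD
  have hDpos : ∀ t, 0 < D t := fun t => by
    have := Real.exp_pos t
    simp only [hD]
    nlinarith
  set g : ℝ → ℝ := fun t => p + t / 4 - p * Real.exp t / D t with hg
  set f : ℝ → ℝ := fun t => p * t + t ^ 2 / 8 - Real.log (D t) with hf
  have hDd : ∀ t, HasDerivAt D (p * Real.exp t) t := fun t => by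
    have h1 : HasDerivAt (fun t : ℝ => Real.exp t) (Real.exp t) t := Real.hasDerivAt_exp t
    have h2 := (h1.const_mul p).const_add (1 - p)
    exact h2
  have hfd : ∀ t, HasDerivAt f (g t) t := fun t => by
    have h1 : HasDerivAt (fun t : ℝ => p * t) p t := by
      simpa using (hasDerivAt_id t).const_mul p
    have h2 : HasDerivAt (fun t : ℝ => t ^ 2 / 8) (2 * t / 8) t := by
      simpa using (hasDerivAt_pow 2 t).div_const 8
    have h3 : HasDerivAt (fun t => Real.log (D t)) (p * Real.exp t / D t) t :=
      (hDd t).log (hDpos t).ne'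
    have := (h1.add h2).sub h3
    refine this.congr_deriv ?_
    simp [hg]; ring
  have hgd : ∀ t, HasDerivAt g (1 / 4 - p * Real.exp t * (1 - p) / (D t) ^ 2) t := fun t => by
    have h1 : HasDerivAt (fun t : ℝ => p + t / 4) (1 / 4) t := by
      simpa using ((hasDerivAt_id t).div_const 4).const_add p
    have h2 : HasDerivAt (fun t => p * Real.exp t) (p * Real.exp t) t := by
      simpa using (Real.hasDerivAt_exp t).const_mul p
    have h3 := h2.div (hDd t) (hDpos t).ne'
    have := h1.sub h3
    refine this.congr_deriv ?_
    have hd : D t - p * Real.exp t = 1 - p := by simp only [hD]; ring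
    congr 1
    rw [← hd]
    ring
  have hg0 : g 0 = 0 := by
    simp [hg, hD]
  have hgmono : Monotone g := by
    apply monotone_of_deriv_nonneg
    · exact fun t => (hgd t).differentiableAt
    · intro t
      rw [(hgd t).deriv]
      have h1 : 0 < D t := hDpos t
      have h2 : 0 < Real.exp t := Real.exp_pos t
      have key : 4 * (p * Real.exp t * (1 - p)) ≤ (D t) ^ 2 := by
        have hd : D t = (1 - p) + p * Real.exp t := rfl
        nlinarith [sq_nonneg ((1 - p) - p * Real.exp t)]
      rw [sub_nonneg, div_le_iff₀ (by positivity)]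
      set A := p * Real.exp t * (1 - p) with hA
      set B := D t ^ 2 with hB
      linarith
  have hfcont : Continuous f :=
    continuous_iff_continuousAt.2 fun t => (hfd t).continuousAt
  have hf0 : f 0 = 0 := by
    simp [hf, hD]
  have hfnonneg : ∀ t, 0 ≤ f t := by
    intro t
    rcases le_or_gt 0 t with ht | ht
    · have hmono : MonotoneOn f (Set.Ici (0 : ℝ)) := by
        apply monotoneOn_of_deriv_nonneg (convex_Ici 0) hfcont.continuousOn
          (fun x _ => (hfd x).differentiableAt.differentiableWithinAt)
        intro x hx
        rw [(hfd x).deriv, ← hg0]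
        exact hgmono (le_of_lt (by simpa using hx))
      have := hmono (Set.self_mem_Ici) (Set.mem_Ici.2 ht) ht
      linarith [hf0 ▸ this]
    · have hanti : AntitoneOn f (Set.Iic (0 : ℝ)) := by
        apply antitoneOn_of_deriv_nonpos (convex_Iic 0) hfcont.continuousOn
          (fun x _ => (hfd x).differentiableAt.differentiableWithinAt)
        intro x hx
        rw [(hfd x).deriv, ← hg0]
        exact hgmono (le_of_lt (by simpa using hx))
      have := hanti (Set.mem_Iic.2 ht.le) (Set.self_mem_Iic) ht.le
      linarith [hf0 ▸ this]
  have := hfnonneg t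
  simp only [hf] at this
  have hlog : Real.log (D t) ≤ p * t + t ^ 2 / 8 := by linarith
  have := (Real.log_le_iff_le_exp (hDpos t)).1 hlog
  simpa [hD] using this


lemma binom_sum_one (p : ℝ) (N : ℕ) :
    ∑ j ∈ range (N + 1), (N.choose j : ℝ) * p ^ j * (1 - p) ^ (N - j) = 1 := by
  have := add_pow p (1 - p) N
  simp only [add_sub_cancel, one_pow] at this
  have h2 : ∑ j ∈ range (N + 1), (N.choose j : ℝ) * p ^ j * (1 - p) ^ (N - j)
      = ∑ m ∈ range (N + 1), p ^ m * (1 - p) ^ (N - m) * (N.choose m : ℝ) :=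
    Finset.sum_congr rfl fun j _ => by ring
  rw [h2, ← this]


lemma binom_chernoff (p : ℝ) (hp0 : 0 < p) (hp1 : p < 1) (N k : ℕ) (hN : 0 < N)
    (hk : (k : ℝ) ≤ N * p) :
    ∑ j ∈ range (k + 1), (N.choose j : ℝ) * p ^ j * (1 - p) ^ (N - j)
      ≤ Real.exp (-2 * (N * p - k) ^ 2 / N) := by
  set q : ℝ := 1 - p with hq
  have hq0 : 0 < q := by linarith
  set t : ℝ := 4 * (N * p - k) / N with ht
  have ht0 : 0 ≤ t := by
    apply div_nonneg _ (by positivity)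
    linarith
  have hkN : k ≤ N := by
    have hN' : (0 : ℝ) < N := by exact_mod_cast hN
    have : (k : ℝ) ≤ N := le_trans hk (by nlinarith)
    exact_mod_cast this
  -- step 1: termwise bound by exponential weights
  have step1 : ∑ j ∈ range (k + 1), (N.choose j : ℝ) * p ^ j * q ^ (N - j)
      ≤ ∑ j ∈ range (k + 1), Real.exp (t * ((k : ℝ) - j)) * ((N.choose j : ℝ) * p ^ j * q ^ (N - j)) := by
    apply Finset.sum_le_sum
    intro j hj
    have hjk : j ≤ k := Nat.lt_succ_iff.1 (Finset.mem_range.1 hj)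
    have h1 : (1 : ℝ) ≤ Real.exp (t * ((k : ℝ) - j)) := by
      rw [Real.one_le_exp_iff]
      apply mul_nonneg ht0
      have : (j : ℝ) ≤ k := Nat.cast_le.2 hjk
      linarith
    have hnn : (0:ℝ) ≤ (N.choose j : ℝ) * p ^ j * q ^ (N - j) := by positivity
    nlinarith
  -- step 2: extend to full range
  have hterm_nonneg : ∀ j ∈ range (N + 1),
      0 ≤ Real.exp (t * ((k : ℝ) - j)) * ((N.choose j : ℝ) * p ^ j * q ^ (N - j)) := by
    intro j _
    positivity
  have step2 : ∑ j ∈ range (k + 1), Real.exp (t * ((k : ℝ) - j)) * ((N.choose j : ℝ) * p ^ j * q ^ (N - j))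
      ≤ ∑ j ∈ range (N + 1), Real.exp (t * ((k : ℝ) - j)) * ((N.choose j : ℝ) * p ^ j * q ^ (N - j)) := by
    apply Finset.sum_le_sum_of_subset_of_nonneg
    · exact Finset.range_subset_range.2 (by omega)
    · intro j hj _; exact hterm_nonneg j hj
  -- step 3: binomial theorem
  have step3 : ∑ j ∈ range (N + 1), Real.exp (t * ((k : ℝ) - j)) * ((N.choose j : ℝ) * p ^ j * q ^ (N - j))
      = Real.exp (t * k) * (p * Real.exp (-t) + q) ^ N := by
    rw [add_pow, Finset.mul_sum]
    apply Finset.sum_congr rfl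
    intro j hj
    have : Real.exp (t * ((k : ℝ) - j)) = Real.exp (t * k) * Real.exp (-t) ^ j := by
      rw [← Real.exp_nat_mul, ← Real.exp_add]
      ring_nf
    rw [this, mul_pow]
    ring
  -- step 4: Hoeffding's lemma
  have step4 : (p * Real.exp (-t) + q) ^ N ≤ Real.exp (N * (-(p * t) + t ^ 2 / 8)) := by
    have h := hoeffding_two_point p hp0 hp1 (-t)
    have hle : p * Real.exp (-t) + q ≤ Real.exp (-(p * t) + t ^ 2 / 8) := by
      have : p * (-t) + (-t) ^ 2 / 8 = -(p * t) + t ^ 2 / 8 := by ring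
      rw [← this]
      linarith
    calc (p * Real.exp (-t) + q) ^ N ≤ (Real.exp (-(p * t) + t ^ 2 / 8)) ^ N := by
          apply pow_le_pow_left₀ (by positivity) hle _
      _ = Real.exp (N * (-(p * t) + t ^ 2 / 8)) := by
          rw [← Real.exp_nat_mul]
  -- combine
  have hNpos : (0 : ℝ) < N := Nat.cast_pos.2 hN
  have hfinal : Real.exp (t * k) * Real.exp (N * (-(p * t) + t ^ 2 / 8))
      = Real.exp (-2 * (N * p - k) ^ 2 / N) := by
    rw [← Real.exp_add]
    congr 1
    rw [ht]
    field_simp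
    ring
  calc ∑ j ∈ range (k + 1), (N.choose j : ℝ) * p ^ j * q ^ (N - j)
      ≤ Real.exp (t * k) * (p * Real.exp (-t) + q) ^ N := by
        rw [← step3]; exact le_trans step1 step2
    _ ≤ Real.exp (t * k) * Real.exp (N * (-(p * t) + t ^ 2 / 8)) := by
        apply mul_le_mul_of_nonneg_left step4 (Real.exp_nonneg _)
    _ = _ := hfinal


lemma binom_tail_step (p : ℝ) (M s : ℕ) (hs : s ≤ M) :
    ∑ j ∈ range (s + 1), (((M + 1).choose j : ℝ)) * p ^ j * (1 - p) ^ (M + 1 - j)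
      = ∑ j ∈ range (s + 1), ((M.choose j : ℝ)) * p ^ j * (1 - p) ^ (M - j)
        - (M.choose s : ℝ) * p ^ (s + 1) * (1 - p) ^ (M - s) := by
  set T := ∑ j ∈ range (s + 1), ((M.choose j : ℝ)) * p ^ j * (1 - p) ^ (M - j) with hT
  have hA : ∑ j ∈ range (s + 1), (((M + 1).choose j : ℝ)) * p ^ j * (1 - p) ^ (M + 1 - j)
      = ∑ i ∈ range s, ((M.choose i : ℝ) + (M.choose (i + 1) : ℝ)) * (p ^ (i + 1) * (1 - p) ^ (M - i))
        + (1 - p) ^ (M + 1) := by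
    rw [Finset.sum_range_succ']
    congr 1
    · apply Finset.sum_congr rfl
      intro i hi
      rw [Nat.choose_succ_succ]
      have he : M + 1 - (i + 1) = M - i := by omega
      rw [he]
      push_cast
      ring
    · simp
  have hB : p * T = ∑ j ∈ range s, ((M.choose j : ℝ)) * (p ^ (j + 1) * (1 - p) ^ (M - j))
      + (M.choose s : ℝ) * (p ^ (s + 1) * (1 - p) ^ (M - s)) := by
    rw [hT, Finset.mul_sum, Finset.sum_range_succ]
    congr 1
    · apply Finset.sum_congr rfl
      intro j hj
      ring
    · ring
  have hC : (1 - p) * T = ∑ i ∈ range s, ((M.choose (i + 1) : ℝ)) * (p ^ (i + 1) * (1 - p) ^ (M - i))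
      + (1 - p) ^ (M + 1) := by
    rw [hT, Finset.mul_sum, Finset.sum_range_succ']
    congr 1
    · apply Finset.sum_congr rfl
      intro i hi
      have hiM : i + 1 ≤ M := by
        have := Finset.mem_range.1 hi; omega
      rw [show M - i = (M - (i + 1)) + 1 by omega, pow_succ]
      ring
    · simp [pow_succ]
      ring
  have hsum : ∑ i ∈ range s, ((M.choose i : ℝ) + (M.choose (i + 1) : ℝ)) * (p ^ (i + 1) * (1 - p) ^ (M - i))
      = ∑ j ∈ range s, ((M.choose j : ℝ)) * (p ^ (j + 1) * (1 - p) ^ (M - j))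
        + ∑ i ∈ range s, ((M.choose (i + 1) : ℝ)) * (p ^ (i + 1) * (1 - p) ^ (M - i)) := by
    rw [← Finset.sum_add_distrib]
    apply Finset.sum_congr rfl
    intro i hi
    ring
  have hPT : p * T + (1 - p) * T = T := by ring
  rw [hA, hsum]
  have := hB
  have := hC
  linarith [hB, hC, hPT]

lemma nb_duality (p : ℝ) (n : ℕ) (hn : 0 < n) (m : ℕ) :
    ∑ k ∈ range (m + 1), (((k + n - 1).choose k : ℝ)) * p ^ n * (1 - p) ^ k
      + ∑ j ∈ range n, (((m + n).choose j : ℝ)) * p ^ j * (1 - p) ^ (m + n - j) = 1 := by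
  induction m with
  | zero =>
    have h1 := binom_sum_one p n
    rw [Finset.sum_range_succ] at h1
    simp only [Nat.choose_self, Nat.cast_one, one_mul, Nat.sub_self, pow_zero, mul_one] at h1
    simp only [Finset.range_one, Finset.sum_singleton, zero_add, Nat.choose_zero_right,
      Nat.cast_one, one_mul, pow_zero, mul_one]
    linarith
  | succ m ih =>
    obtain ⟨s, rfl⟩ : ∃ s, n = s + 1 := ⟨n - 1, by omega⟩
    have hstep := binom_tail_step p (m + (s + 1)) s (by omega)
    have hcast : m + 1 + (s + 1) = (m + (s + 1)) + 1 := by omega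
    rw [Finset.sum_range_succ, hcast]
    have hnb : ((m + (s + 1) + 1 - 1).choose (m + 1) : ℝ) = ((m + (s + 1)).choose s : ℝ) := by
      have h1 : m + (s + 1) + 1 - 1 = m + (s + 1) := by omega
      rw [h1]
      congr 1
      rw [← Nat.choose_symm (by omega)]
      congr 1
      omega
    rw [hnb, hstep]
    have hq : (1 - p) ^ ((m + (s + 1)) - s) = (1 - p) ^ (m + 1) := by
      congr 1
      omega
    rw [hq] at *
    linarith [ih]

set_option maxHeartbeats 1600000 in
/-- Upper-tail deviation of a negative binomial random variable Z ∼ NB(n,p)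
(counting failures before the n-th success), with mean rate μ' = (1-p)/p:
for any η > 0, Pr(Z/n - μ' > η) ≤ exp(-2nη² / ((1+μ')²(η+1+μ'))). -/
theorem negative_binomial_upper_tail {Ω : Type*} [MeasurableSpace Ω]
    (μ : Measure Ω) [IsProbabilityMeasure μ]
    (p : ℝ) (hp0 : 0 < p) (hp1 : p < 1) (n : ℕ) (hn : 0 < n)
    (Z : Ω → ℕ) (hmeas : Measurable Z)
    (hlaw : ∀ m, μ {ω | Z ω = m}
      = ENNReal.ofReal ((Nat.choose (m + n - 1) m : ℝ) * p ^ n * (1 - p) ^ m))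
    (η : ℝ) (hη : 0 < η) :
    μ {ω | (1 - p) / p + η < (Z ω : ℝ) / n}
      ≤ ENNReal.ofReal (Real.exp (-(2 * n * η ^ 2)
          / ((1 + (1 - p) / p) ^ 2 * (η + 1 + (1 - p) / p)))) := by
  have hnr : (0 : ℝ) < n := Nat.cast_pos.2 hn
  set μ' : ℝ := (1 - p) / p with hμ'
  have hμ'pos : 0 < μ' := by
    apply div_pos (by linarith) hp0
  have h1μ : 1 + μ' = 1 / p := by
    rw [hμ']; field_simp; ring
  set x : ℝ := n * (μ' + η) with hx
  have hx0 : 0 < x := by positivity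
  set m : ℕ := ⌊x⌋₊ with hm
  set N : ℕ := m + n with hN
  have hNr : (0 : ℝ) < N := by
    have : 0 < N := by omega
    exact_mod_cast this
  -- event rewrite
  have hE : {ω | μ' + η < (Z ω : ℝ) / n} = {ω | Z ω ≤ m}ᶜ := by
    ext ω
    simp only [Set.mem_setOf_eq, Set.mem_compl_iff, not_le]
    rw [lt_div_iff₀ hnr]
    constructor
    · intro h
      have : x < Z ω := by rw [hx]; linarith [mul_comm (μ' + η) (n : ℝ)]
      exact Nat.floor_lt hx0.le |>.2 this |>.trans_le le_rfl
    · intro h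
      have hxz : x < Z ω := (Nat.floor_lt hx0.le).1 h
      rw [hx] at hxz; linarith [mul_comm (μ' + η) (n : ℝ)]
  -- nb pmf values
  set nb : ℕ → ℝ := fun k => ((k + n - 1).choose k : ℝ) * p ^ n * (1 - p) ^ k with hnb
  have hnbnn : ∀ k, 0 ≤ nb k := fun k => by
    have h1 : (0:ℝ) ≤ ((k + n - 1).choose k : ℝ) := Nat.cast_nonneg _
    have h2 : (0:ℝ) ≤ p ^ n := by positivity
    have h3 : (0:ℝ) ≤ (1 - p) ^ k := pow_nonneg (by linarith) k
    exact mul_nonneg (mul_nonneg h1 h2) h3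
  set S : ℝ := ∑ k ∈ range (m + 1), nb k with hS
  set T : ℝ := ∑ j ∈ range n, ((N.choose j : ℝ)) * p ^ j * (1 - p) ^ (N - j) with hT
  have hST : S + T = 1 := nb_duality p n hn m
  have hTnn : 0 ≤ T := Finset.sum_nonneg fun j _ => by
    have h3 : (0:ℝ) ≤ (1 - p) ^ (N - j) := pow_nonneg (by linarith) _
    have h1 : (0:ℝ) ≤ ((N.choose j : ℕ) : ℝ) := Nat.cast_nonneg _
    have h2 : (0:ℝ) ≤ p ^ j := by positivity
    exact mul_nonneg (mul_nonneg h1 h2) h3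
  have hSnn : 0 ≤ S := Finset.sum_nonneg fun k _ => hnbnn k
  -- measure of the complement event
  have hmeasc : MeasurableSet {ω | Z ω ≤ m} := hmeas measurableSet_Iic
  have hunion : {ω | Z ω ≤ m} = ⋃ k ∈ range (m + 1), {ω | Z ω = k} := by
    ext ω
    simp [Nat.lt_succ_iff]
  have hμc : μ {ω | Z ω ≤ m} = ENNReal.ofReal S := by
    rw [hunion, measure_biUnion_finset]
    · rw [hS, ENNReal.ofReal_sum_of_nonneg fun k _ => hnbnn k]
      exact Finset.sum_congr rfl fun k _ => hlaw k
    · intro i _ j _ hij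
      simp only [Function.onFun, Set.disjoint_left]
      intro ω h1 h2
      exact hij (h1 ▸ h2 ▸ rfl)
    · intro k _
      exact hmeas (measurableSet_singleton k)
  -- Hoeffding bound on T
  have hmlex : (m : ℝ) ≤ x := Nat.floor_le hx0.le
  have hxltm : x < m + 1 := Nat.lt_floor_add_one x
  have hNcast : (N : ℝ) = m + n := by rw [hN]; push_cast; ring
  have hd : (n : ℝ) * p * η + (1 - p) ≤ (N : ℝ) * p - ((n : ℝ) - 1) := by
    have hpx : p * x = n * (1 - p) + n * p * η := by
      rw [hx, hμ']
      field_simp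
    rw [hNcast]
    nlinarith [hxltm, hp0]
  have hd0 : (0 : ℝ) < (N : ℝ) * p - ((n : ℝ) - 1) := by
    nlinarith [mul_pos (mul_pos hnr hp0) hη]
  have hkcast : ((n - 1 : ℕ) : ℝ) = (n : ℝ) - 1 := by
    have : (1 : ℕ) ≤ n := hn
    push_cast [this]
    ring
  have hkNp : ((n - 1 : ℕ) : ℝ) ≤ (N : ℝ) * p := by rw [hkcast]; linarith
  have hcher := binom_chernoff p hp0 hp1 N (n - 1) (by omega) hkNp
  have hrange : (n - 1) + 1 = n := by omega
  rw [hrange] at hcher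
  have hTB : T ≤ Real.exp (-2 * ((N : ℝ) * p - ((n : ℝ) - 1)) ^ 2 / N) := by
    rw [hT]; rw [hkcast] at hcher; exact hcher
  -- exponent comparison
  have hNle : (N : ℝ) ≤ n * (1 + μ' + η) := by
    rw [hNcast]
    nlinarith [hmlex]
  have hexp : -2 * ((N : ℝ) * p - ((n : ℝ) - 1)) ^ 2 / N
      ≤ -(2 * n * η ^ 2) / ((1 + μ') ^ 2 * (η + 1 + μ')) := by
    set d : ℝ := (N : ℝ) * p - ((n : ℝ) - 1) with hdd
    clear_value d
    clear hdd hT hS hnb hμc hunion hE hlaw hmeas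
    clear_value S T nb N m x
    have hnpη : (0:ℝ) < (n:ℝ) * p * η := mul_pos (mul_pos hnr hp0) hη
    have hdnp : (n : ℝ) * p * η < d := by nlinarith
    have hA : (0:ℝ) < 1 + μ' + η := by linarith
    have hp' : p ≠ 0 := ne_of_gt hp0
    have hden : (1 + μ') ^ 2 * (η + 1 + μ') = (1 + μ' + η) / p ^ 2 := by
      rw [show η + 1 + μ' = 1 + μ' + η from by ring, h1μ, div_pow, one_pow,
        one_div_mul_eq_div]
    rw [hden]
    have h1 : -2 * d ^ 2 / (N:ℝ) = -(2 * d ^ 2 / N) := by ring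
    have h2 : -(2 * (n:ℝ) * η ^ 2) / ((1 + μ' + η) / p ^ 2)
        = -((2 * (n:ℝ) * η ^ 2 * p ^ 2) / (1 + μ' + η)) := by
      rw [div_div_eq_mul_div]; ring
    rw [h1, h2, neg_le_neg_iff, div_le_div_iff₀ hA hNr]
    have main : 2 * (n:ℝ) * η ^ 2 * N * p ^ 2 ≤ 2 * d ^ 2 * (1 + μ' + η) := by
      have h1 : 2 * (n:ℝ) * η ^ 2 * p ^ 2 * N ≤ 2 * (n:ℝ) * η ^ 2 * p ^ 2 * (n * (1 + μ' + η)) :=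
        mul_le_mul_of_nonneg_left hNle (by positivity)
      have h2 : ((n:ℝ) * p * η) ^ 2 ≤ d ^ 2 := by nlinarith
      have h3 : 2 * ((n:ℝ) * p * η) ^ 2 * (1 + μ' + η) ≤ 2 * d ^ 2 * (1 + μ' + η) := by
        nlinarith
      have h4 : 2 * (n:ℝ) * η ^ 2 * p ^ 2 * (n * (1 + μ' + η))
          = 2 * ((n:ℝ) * p * η) ^ 2 * (1 + μ' + η) := by ring
      linarith
    linarith [main]
  -- conclude
  have hT1 : T ≤ 1 := by linarith
  have hTfinal : T ≤ Real.exp (-(2 * n * η ^ 2) / ((1 + μ') ^ 2 * (η + 1 + μ'))) :=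
    le_trans hTB (Real.exp_le_exp.2 hexp)
  have hone : (1 : ENNReal) - ENNReal.ofReal (1 - T) = ENNReal.ofReal T := by
    rw [← ENNReal.ofReal_one, ← ENNReal.ofReal_sub _ (show (0:ℝ) ≤ 1 - T by linarith)]
    norm_num
  have hμE : μ {ω | μ' + η < (Z ω : ℝ) / n} = ENNReal.ofReal T := by
    rw [hE, prob_compl_eq_one_sub hmeasc, hμc, show S = 1 - T by linarith, hone]
  rw [hμE]
  exact ENNReal.ofReal_le_ofReal hTfinal
end

section
/- Rank-broken pairwise estimates concentrate: let S₁,…,S_T be subsets (possibly adaptively chosen) each containing fixed items i and j, and i_t the Plackett-Luce winner of S_t. With n_i(T) = #{t : i_t = i} and n_{ij}(T) = #{t : i_t ∈ {i,j}}, for any positive integer v and η ∈ (0,1): Pr( n_i(T)/n_{ij}(T) - θ_i/(θ_i+θ_j) ≥ η and n_{ij}(T) ≥ v ) ≤ exp(-2vη²). -/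
open MeasureTheory ProbabilityTheory Real

lemma bernoulli_hoeffding {p : ℝ} (hp0 : 0 ≤ p) (hp1 : p ≤ 1) (t : ℝ) :
    (1 - p) * exp (-(t * p)) + p * exp (t * (1 - p)) ≤ exp (t ^ 2 / 8) := by
  have hD : ∀ s : ℝ, 0 < 1 - p + p * exp s := by
    intro s
    rcases eq_or_lt_of_le hp0 with h | h
    · simp [← h]
    · nlinarith [exp_pos s]
  have hDd : ∀ s : ℝ, HasDerivAt (fun s => 1 - p + p * exp s) (p * exp s) s := by
    intro s
    simpa using ((Real.hasDerivAt_exp s).const_mul p).const_add (1 - p)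
  have hfd : ∀ s : ℝ, HasDerivAt (fun s => -(s * p) + log (1 - p + p * exp s))
      (-p + p * exp s / (1 - p + p * exp s)) s := by
    intro s
    have h1 : HasDerivAt (fun s : ℝ => -(s * p)) (-p) s := by
      have h := ((hasDerivAt_id s).mul_const p).neg; rw [one_mul] at h; exact h
    have h2 : HasDerivAt (fun s => log (1 - p + p * exp s))
        (p * exp s / (1 - p + p * exp s)) s := by
      have := (Real.hasDerivAt_log (hD s).ne').comp s (hDd s)
      rw [div_eq_inv_mul]; exact this
    exact h1.add h2
  have hgd : ∀ s : ℝ, HasDerivAt (fun s => -p + p * exp s / (1 - p + p * exp s))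
      (p * (1 - p) * exp s / (1 - p + p * exp s) ^ 2) s := by
    intro s
    have h1 : HasDerivAt (fun s => p * exp s) (p * exp s) s :=
      (Real.hasDerivAt_exp s).const_mul p
    have h2 := (h1.div (hDd s) (hD s).ne').const_add (-p)
    have h3 : (0:ℝ) < 1 - p + p * exp s := hD s
    have h4 : p * (1 - p) * exp s / (1 - p + p * exp s) ^ 2
        = (p * exp s * (1 - p + p * exp s) - p * exp s * (p * exp s)) / (1 - p + p * exp s) ^ 2 := by
      congr 1
      ring
    rw [h4]; exact h2
  -- s/4 - g s is monotone
  have hmono : Monotone (fun s => s / 4 - (-p + p * exp s / (1 - p + p * exp s))) := by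
    have hd : ∀ s : ℝ, HasDerivAt (fun s => s / 4 - (-p + p * exp s / (1 - p + p * exp s)))
        (1 / 4 - p * (1 - p) * exp s / (1 - p + p * exp s) ^ 2) s := by
      intro s
      exact ((hasDerivAt_id s).div_const 4).sub (hgd s)
    apply monotone_of_deriv_nonneg
    · exact fun s => ((hd s).differentiableAt)
    · intro s
      rw [(hd s).deriv]
      have hDs := hD s
      have hE := exp_pos s
      have h4 : p * (1 - p) * exp s / (1 - p + p * exp s) ^ 2 ≤ 1 / 4 := by
        rw [div_le_iff₀ (by positivity)]
        nlinarith [sq_nonneg ((1 - p) - p * exp s)]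
      linarith
  have hg0 : -p + p * 1 / (1 - p + p * 1) = 0 := by
    have h1 : (1:ℝ) - p + p * 1 = 1 := by ring
    rw [h1]; simp
  have hg_le : ∀ s : ℝ, 0 ≤ s → -p + p * exp s / (1 - p + p * exp s) ≤ s / 4 := by
    intro s hs
    have h := hmono hs
    dsimp only at h
    rw [exp_zero] at h
    linarith
  have hg_ge : ∀ s : ℝ, s ≤ 0 → s / 4 ≤ -p + p * exp s / (1 - p + p * exp s) := by
    intro s hs
    have h := hmono hs
    dsimp only at h
    rw [exp_zero] at h
    linarith
  -- F := s^2/8 - f s ≥ 0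
  have hFd : ∀ s : ℝ, HasDerivAt (fun s => s ^ 2 / 8 - (-(s * p) + log (1 - p + p * exp s)))
      (s / 4 - (-p + p * exp s / (1 - p + p * exp s))) s := by
    intro s
    have h1 : HasDerivAt (fun s : ℝ => s ^ 2 / 8) (s / 4) s := by
      have := ((hasDerivAt_pow 2 s).div_const 8)
      rw [show ((2:ℕ):ℝ) * s ^ (2 - 1) / 8 = s / 4 by rw [show (2:ℕ) - 1 = 1 from rfl, pow_one]; push_cast; ring] at this; exact this
    exact h1.sub (hfd s)
  have hF0 : (0:ℝ) ^ 2 / 8 - (-(0 * p) + log (1 - p + p * exp 0)) = 0 := by simp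
  have hFdiff : ∀ s : ℝ, DifferentiableAt ℝ
      (fun s => s ^ 2 / 8 - (-(s * p) + log (1 - p + p * exp s))) s :=
    fun s => (hFd s).differentiableAt
  have hF : ∀ s : ℝ, 0 ≤ s ^ 2 / 8 - (-(s * p) + log (1 - p + p * exp s)) := by
    intro s
    rcases le_total 0 s with hs | hs
    · have hmonoF : MonotoneOn (fun s => s ^ 2 / 8 - (-(s * p) + log (1 - p + p * exp s)))
          (Set.Ici 0) := by
        apply monotoneOn_of_deriv_nonneg (convex_Ici 0)
          ((Differentiable.continuous hFdiff).continuousOn)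
          (fun x _ => (hFdiff x).differentiableWithinAt)
        intro x hx
        rw [(hFd x).deriv]
        have hx0 : (0:ℝ) < x := by simpa using hx
        have := hg_le x hx0.le
        linarith
      have h2 := hmonoF Set.self_mem_Ici (Set.mem_Ici.mpr hs) hs
      dsimp only at h2
      rw [hF0] at h2
      linarith
    · have hmonoF : AntitoneOn (fun s => s ^ 2 / 8 - (-(s * p) + log (1 - p + p * exp s)))
          (Set.Iic 0) := by
        apply antitoneOn_of_deriv_nonpos (convex_Iic 0)
          ((Differentiable.continuous hFdiff).continuousOn)
          (fun x _ => (hFdiff x).differentiableWithinAt)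
        intro x hx
        rw [(hFd x).deriv]
        have hx0 : x < (0:ℝ) := by simpa using hx
        have := hg_ge x hx0.le
        linarith
      have h2 := hmonoF (Set.mem_Iic.mpr hs) Set.self_mem_Iic hs
      dsimp only at h2
      rw [hF0] at h2
      linarith
  have hft : -(t * p) + log (1 - p + p * exp t) ≤ t ^ 2 / 8 := by linarith [hF t]
  have hexp : (1 - p) * exp (-(t * p)) + p * exp (t * (1 - p))
      = exp (-(t * p) + log (1 - p + p * exp t)) := by
    rw [exp_add, exp_log (hD t), show t * (1 - p) = -(t * p) + t by ring, exp_add]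
    ring
  rw [hexp]
  exact exp_le_exp.mpr hft

/-- Rank-broken pairwise estimates concentrate (Lemma: pairwise win-probability
estimates for the Plackett-Luce model).  Subsets S_t containing fixed items i,j
are chosen adaptively (measurably w.r.t. the past filtration ℱ), and the winner
I_t of S_t is drawn from the Plackett-Luce distribution on S_t conditionally on
the past.  With n_i(T) = #{t < T : I_t = i} and
n_{ij}(T) = #{t < T : I_t ∈ {i,j}}, for every positive integer v and η ∈ (0,1):
Pr( n_i(T)/n_{ij}(T) - θ_i/(θ_i+θ_j) ≥ η ∧ n_{ij}(T) ≥ v ) ≤ exp(-2vη²). -/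
theorem rank_breaking_concentration {Ω : Type*} {m0 : MeasurableSpace Ω}
    (μ : Measure Ω) [IsProbabilityMeasure μ] {n : ℕ}
    (θ : Fin n → ℝ) (hθ : ∀ a, 0 < θ a) (i j : Fin n) (hij : i ≠ j)
    (ℱ : Filtration ℕ m0)
    (S : ℕ → Ω → Finset (Fin n)) (I : ℕ → Ω → Fin n)
    (hS_adapted : ∀ t, @Measurable Ω (Finset (Fin n)) (ℱ t) ⊤ (S t))
    (hI_meas : ∀ t, @Measurable Ω (Fin n) (ℱ (t + 1)) _ (I t))
    (hmem : ∀ t ω, i ∈ S t ω ∧ j ∈ S t ω)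
    (hcond : ∀ t a,
      (μ[Set.indicator {ω | I t ω = a} (fun _ => (1 : ℝ)) | ℱ t])
        =ᵐ[μ] fun ω => if a ∈ S t ω then θ a / ∑ k ∈ S t ω, θ k else 0)
    (T v : ℕ) (hv : 0 < v) (η : ℝ) (hη0 : 0 < η) (hη1 : η < 1) :
    μ {ω | η ≤ (((Finset.range T).filter fun t => I t ω = i).card : ℝ)
              / (((Finset.range T).filter fun t => I t ω = i ∨ I t ω = j).card : ℝ)
            - θ i / (θ i + θ j)
          ∧ v ≤ ((Finset.range T).filter fun t => I t ω = i ∨ I t ω = j).card}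
      ≤ ENNReal.ofReal (Real.exp (-2 * v * η ^ 2)) := by
  classical
  set p : ℝ := θ i / (θ i + θ j) with hp_def
  have hθij : 0 < θ i + θ j := by linarith [hθ i, hθ j]
  have hp0 : 0 < p := div_pos (hθ i) hθij
  have hp1 : p < 1 := by
    rw [hp_def, div_lt_one hθij]; linarith [hθ j]
  set A : ℝ := Real.exp (4 * η * (1 - p) - 2 * η ^ 2) with hA_def
  set B : ℝ := Real.exp (-(4 * η * p) - 2 * η ^ 2) with hB_def
  have hA_pos : 0 < A := Real.exp_pos _
  have hB_pos : 0 < B := Real.exp_pos _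
  -- the multiplicative increments
  set g : ℕ → Ω → ℝ := fun t =>
    (fun _ => (1 : ℝ))
    + ((A - 1) • Set.indicator {ω | I t ω = i} (fun _ => (1 : ℝ))
       + (B - 1) • Set.indicator {ω | I t ω = j} (fun _ => (1 : ℝ))) with hg_def
  have hg_val : ∀ t ω, g t ω = if I t ω = i then A else if I t ω = j then B else 1 := by
    intro t ω
    simp only [hg_def, Pi.add_apply, Pi.smul_apply, Set.indicator_apply, Set.mem_setOf_eq,
      smul_eq_mul]
    by_cases h1 : I t ω = i
    · have h2 : ¬ I t ω = j := fun h => hij (h1 ▸ h ▸ rfl)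
      simp [h1, h2, hij, Ne.symm hij]
      try ring
    · by_cases h2 : I t ω = j
      · simp [h1, h2, hij, Ne.symm hij]
        try ring
      · simp [h1, h2]
  have hg_pos : ∀ t ω, 0 < g t ω := by
    intro t ω; rw [hg_val]
    split_ifs <;> [exact hA_pos; exact hB_pos; norm_num]
  have hg_le : ∀ t ω, g t ω ≤ A + B + 1 := by
    intro t ω; rw [hg_val]
    split_ifs <;> nlinarith
  -- measurability of g t w.r.t. ℱ (t+1)
  have hg_meas : ∀ t, @Measurable Ω ℝ (ℱ (t + 1)) _ (g t) := by
    intro t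
    have : g t = (fun a : Fin n => if a = i then A else if a = j then B else 1) ∘ I t := by
      funext ω; rw [hg_val]; rfl
    rw [this]
    exact Measurable.comp measurable_from_top (hI_meas t)
  have hg_meas0 : ∀ t, Measurable (g t) := fun t => (hg_meas t).mono (ℱ.le (t + 1)) le_rfl
  have hg_int : ∀ t, Integrable (g t) μ := by
    intro t
    refine (integrable_const (A + B + 1)).mono' (hg_meas0 t).aestronglyMeasurable ?_
    refine Filter.Eventually.of_forall fun ω => ?_
    rw [Real.norm_eq_abs, abs_of_pos (hg_pos t ω)]
    exact hg_le t ω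
  -- indicators are integrable
  have hind_meas : ∀ t (a : Fin n), MeasurableSet {ω | I t ω = a} :=
    fun t a => ((hI_meas t).mono (ℱ.le (t + 1)) le_rfl) (measurableSet_singleton a)
  have hind_int : ∀ t (a : Fin n),
      Integrable (Set.indicator {ω | I t ω = a} (fun _ => (1 : ℝ))) μ :=
    fun t a => (integrable_const (1 : ℝ)).indicator (hind_meas t a)
  -- conditional expectation of g t is ≤ 1
  have hcond_g : ∀ t, (μ[g t | ℱ t]) ≤ᵐ[μ] fun _ => 1 := by
    intro t
    have h1 : (μ[g t | ℱ t]) =ᵐ[μ]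
        (μ[(fun _ : Ω => (1 : ℝ)) | ℱ t])
        + ((μ[(A - 1) • Set.indicator {ω | I t ω = i} (fun _ => (1 : ℝ)) | ℱ t])
           + (μ[(B - 1) • Set.indicator {ω | I t ω = j} (fun _ => (1 : ℝ)) | ℱ t])) := by
      refine (condExp_add (integrable_const _) ?_ (ℱ t)).trans ?_
      · exact ((hind_int t i).smul (A - 1)).add ((hind_int t j).smul (B - 1))
      · exact Filter.EventuallyEq.add Filter.EventuallyEq.rfl
          (condExp_add ((hind_int t i).smul (A - 1)) ((hind_int t j).smul (B - 1)) (ℱ t))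
    have h2 := condExp_smul (μ := μ) (m := ℱ t) (A - 1)
      (Set.indicator {ω | I t ω = i} (fun _ => (1 : ℝ)))
    have h3 := condExp_smul (μ := μ) (m := ℱ t) (B - 1)
      (Set.indicator {ω | I t ω = j} (fun _ => (1 : ℝ)))
    have h4 := hcond t i
    have h5 := hcond t j
    have hB_sum : ∀ ω, 0 < ∑ k ∈ S t ω, θ k := by
      intro ω
      exact Finset.sum_pos (fun k _ => hθ k) ⟨i, (hmem t ω).1⟩
    -- key numeric inequality
    have hkey : (A - 1) * θ i + (B - 1) * θ j ≤ 0 := by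
      have H := bernoulli_hoeffding hp0.le hp1.le (4 * η)
      have h8 : (4 * η) ^ 2 / 8 = 2 * η ^ 2 := by ring
      rw [h8] at H
      have hθi : θ i = p * (θ i + θ j) := by
        rw [hp_def]; field_simp
      have hθj : θ j = (1 - p) * (θ i + θ j) := by
        rw [hp_def]; field_simp; ring
      have hee : Real.exp (-(2 * η ^ 2)) * Real.exp (2 * η ^ 2) = 1 := by
        rw [← Real.exp_add, show -(2 * η ^ 2) + 2 * η ^ 2 = 0 by ring, Real.exp_zero]
      have hAe : A = Real.exp (4 * η * (1 - p)) * Real.exp (-(2 * η ^ 2)) := by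
        rw [hA_def, ← Real.exp_add]
        congr 1
        try ring
      have hBe : B = Real.exp (-(4 * η * p)) * Real.exp (-(2 * η ^ 2)) := by
        rw [hB_def, ← Real.exp_add]
        congr 1
        try ring
      have hstep : Real.exp (-(2 * η ^ 2))
          * ((1 - p) * Real.exp (-(4 * η * p)) + p * Real.exp (4 * η * (1 - p))) ≤ 1 := by
        calc Real.exp (-(2 * η ^ 2))
                * ((1 - p) * Real.exp (-(4 * η * p)) + p * Real.exp (4 * η * (1 - p)))
            ≤ Real.exp (-(2 * η ^ 2)) * Real.exp (2 * η ^ 2) :=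
              mul_le_mul_of_nonneg_left H (Real.exp_pos _).le
          _ = 1 := hee
      have hgoal_eq : (A - 1) * θ i + (B - 1) * θ j
          = (Real.exp (4 * η * (1 - p)) * Real.exp (-(2 * η ^ 2)) - 1) * (p * (θ i + θ j))
            + (Real.exp (-(4 * η * p)) * Real.exp (-(2 * η ^ 2)) - 1)
              * ((1 - p) * (θ i + θ j)) := by
        rw [hAe, hBe, ← hθi, ← hθj]
      rw [hgoal_eq]
      nlinarith [mul_le_mul_of_nonneg_right hstep hθij.le]
    filter_upwards [h1, h2, h3, h4, h5] with ω hω1 hω2 hω3 hω4 hω5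
    rw [hω1]
    simp only [Pi.add_apply]
    rw [hω2, hω3]
    simp only [Pi.smul_apply, smul_eq_mul]
    rw [hω4, hω5]
    rw [if_pos (hmem t ω).1, if_pos (hmem t ω).2]
    have hcc : (μ[(fun _ : Ω => (1:ℝ)) | ℱ t]) ω = 1 := by
      rw [condExp_const (ℱ.le t)]
    rw [hcc]
    have hS_pos := hB_sum ω
    have : (A - 1) * (θ i / ∑ k ∈ S t ω, θ k) + (B - 1) * (θ j / ∑ k ∈ S t ω, θ k)
        = ((A - 1) * θ i + (B - 1) * θ j) / ∑ k ∈ S t ω, θ k := by ring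
    rw [this]
    have hd : ((A - 1) * θ i + (B - 1) * θ j) / ∑ k ∈ S t ω, θ k ≤ 0 :=
      div_nonpos_of_nonpos_of_nonneg hkey hS_pos.le
    linarith
  -- partial products
  set P : ℕ → Ω → ℝ := fun T ω => ∏ t ∈ Finset.range T, g t ω with hP_def
  have hP_nonneg : ∀ T ω, 0 ≤ P T ω :=
    fun T ω => Finset.prod_nonneg fun t _ => (hg_pos t ω).le
  have hP_measF : ∀ T, @Measurable Ω ℝ (ℱ T) _ (P T) := by
    intro T
    apply Finset.measurable_prod
    intro t ht
    exact (hg_meas t).mono (ℱ.mono (Nat.succ_le_of_lt (Finset.mem_range.mp ht))) le_rfl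
  have hP_meas0 : ∀ T, Measurable (P T) := fun T => (hP_measF T).mono (ℱ.le T) le_rfl
  have hP_int : ∀ T, Integrable (P T) μ := by
    intro T
    refine (integrable_const ((A + B + 1) ^ T)).mono' (hP_meas0 T).aestronglyMeasurable ?_
    refine Filter.Eventually.of_forall fun ω => ?_
    rw [Real.norm_eq_abs, abs_of_nonneg (hP_nonneg T ω)]
    calc P T ω ≤ ∏ _t ∈ Finset.range T, (A + B + 1) :=
          Finset.prod_le_prod (fun t _ => (hg_pos t ω).le) (fun t _ => hg_le t ω)
      _ = (A + B + 1) ^ T := by simp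
  -- supermartingale property: ∫ P T ≤ 1
  have hP_int_le : ∀ T, ∫ ω, P T ω ∂μ ≤ 1 := by
    intro T
    induction T with
    | zero => simp [hP_def]
    | succ T ih =>
      have hsucc : P (T + 1) = P T * g T := by
        funext ω
        simp only [hP_def, Pi.mul_apply]
        exact Finset.prod_range_succ _ T
      have hint_prod : Integrable (P T * g T) μ := by
        rw [← hsucc]; exact hP_int (T + 1)
      have hpull : (μ[P T * g T | ℱ T]) =ᵐ[μ] P T * (μ[g T | ℱ T]) :=
        condExp_mul_of_stronglyMeasurable_left (hP_measF T).stronglyMeasurable hint_prod (hg_int T)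
      have h1 : ∫ ω, P (T + 1) ω ∂μ = ∫ ω, (P T * g T) ω ∂μ := by rw [hsucc]
      have h2 : ∫ ω, (P T * g T) ω ∂μ = ∫ ω, (μ[P T * g T | ℱ T]) ω ∂μ :=
        (integral_condExp (ℱ.le T) (f := P T * g T)).symm
      have h3 : ∫ ω, (μ[P T * g T | ℱ T]) ω ∂μ = ∫ ω, (P T * (μ[g T | ℱ T])) ω ∂μ :=
        integral_congr_ae hpull
      have h4 : ∫ ω, (P T * (μ[g T | ℱ T])) ω ∂μ ≤ ∫ ω, P T ω ∂μ := by
        apply integral_mono_ae (integrable_condExp.congr hpull) (hP_int T)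
        filter_upwards [hcond_g T] with ω hω
        simp only [Pi.mul_apply]
        calc P T ω * (μ[g T | ℱ T]) ω ≤ P T ω * 1 :=
              mul_le_mul_of_nonneg_left hω (hP_nonneg T ω)
          _ = P T ω := mul_one _
      linarith [h1, h2, h3, h4]
  -- pointwise lower bound on the event
  have hsubset : {ω | η ≤ (((Finset.range T).filter fun t => I t ω = i).card : ℝ)
              / (((Finset.range T).filter fun t => I t ω = i ∨ I t ω = j).card : ℝ)
            - θ i / (θ i + θ j)
          ∧ v ≤ ((Finset.range T).filter fun t => I t ω = i ∨ I t ω = j).card}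
      ⊆ {ω | Real.exp (2 * v * η ^ 2) ≤ P T ω} := by
    intro ω hω
    obtain ⟨hdev, hcount⟩ := hω
    set Ni : ℝ := (((Finset.range T).filter fun t => I t ω = i).card : ℝ) with hNi_def
    set Nij : ℝ := (((Finset.range T).filter fun t => I t ω = i ∨ I t ω = j).card : ℝ)
      with hNij_def
    have hNij_v : (v : ℝ) ≤ Nij := by rw [hNij_def]; exact_mod_cast hcount
    have hNij_pos : 0 < Nij := lt_of_lt_of_le (by exact_mod_cast hv) hNij_v
    have hNi : (p + η) * Nij ≤ Ni := by
      have hq : p + η ≤ Ni / Nij := by rw [hp_def]; linarith [hdev]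
      exact (le_div_iff₀ hNij_pos).mp hq
    -- P T ω = exp (4η Ni - 4ηp Nij - 2η² Nij)
    have hPe : P T ω = Real.exp (∑ t ∈ Finset.range T,
        ((4 * η * (1 - p) - 2 * η ^ 2) * (if I t ω = i then (1:ℝ) else 0)
         + (-(4 * η * p) - 2 * η ^ 2) * (if I t ω = j then (1:ℝ) else 0))) := by
      rw [Real.exp_sum, hP_def]
      apply Finset.prod_congr rfl
      intro t _
      rw [hg_val]
      by_cases h1 : I t ω = i
      · have h2 : ¬ I t ω = j := fun h => hij (h1 ▸ h ▸ rfl)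
        simp [h1, h2, hA_def, hij, Ne.symm hij]
      · by_cases h2 : I t ω = j
        · simp [h1, h2, hB_def, hij, Ne.symm hij]
        · simp [h1, h2]
    have hsum_i : ∑ t ∈ Finset.range T, (if I t ω = i then (1:ℝ) else 0) = Ni := by
      rw [Finset.sum_boole]
    have hsum_j : ∑ t ∈ Finset.range T, (if I t ω = j then (1:ℝ) else 0) = Nij - Ni := by
      rw [Finset.sum_boole]
      have hcard : ((Finset.range T).filter fun t => I t ω = i ∨ I t ω = j).card
          = ((Finset.range T).filter fun t => I t ω = i).card
            + ((Finset.range T).filter fun t => I t ω = j).card := by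
        rw [Finset.filter_or]
        apply Finset.card_union_of_disjoint
        simp only [Finset.disjoint_left, Finset.mem_filter]
        rintro t ⟨-, h1⟩ ⟨-, h2⟩
        exact hij (h1 ▸ h2 ▸ rfl)
      rw [hNij_def, hNi_def, hcard]
      push_cast
      ring
    have hPe2 : P T ω = Real.exp ((4 * η * (1 - p) - 2 * η ^ 2) * Ni
        + (-(4 * η * p) - 2 * η ^ 2) * (Nij - Ni)) := by
      rw [hPe]
      congr 1
      rw [Finset.sum_add_distrib, ← Finset.mul_sum, ← Finset.mul_sum, hsum_i, hsum_j]
    rw [Set.mem_setOf_eq, hPe2]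
    apply Real.exp_le_exp.mpr
    have hexpand : (4 * η * (1 - p) - 2 * η ^ 2) * Ni + (-(4 * η * p) - 2 * η ^ 2) * (Nij - Ni)
        = 4 * η * (Ni - p * Nij) - 2 * η ^ 2 * Nij := by ring
    rw [hexpand]
    nlinarith [mul_le_mul_of_nonneg_left hNi (by linarith : (0:ℝ) ≤ 4 * η),
      mul_le_mul_of_nonneg_left hNij_v (by positivity : (0:ℝ) ≤ 2 * η ^ 2)]
  -- Markov
  have hmark := mul_meas_ge_le_integral_of_nonneg
    (Filter.Eventually.of_forall (hP_nonneg T)) (hP_int T) (Real.exp (2 * v * η ^ 2))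
  have hexp_pos : (0:ℝ) < Real.exp (2 * v * η ^ 2) := Real.exp_pos _
  have htoReal : (μ {ω | Real.exp (2 * v * η ^ 2) ≤ P T ω}).toReal
      ≤ Real.exp (-2 * v * η ^ 2) := by
    have h1 : Real.exp (2 * v * η ^ 2) * (μ {ω | Real.exp (2 * v * η ^ 2) ≤ P T ω}).toReal
        ≤ 1 := le_trans hmark (hP_int_le T)
    have h2 : Real.exp (-2 * v * η ^ 2) * Real.exp (2 * v * η ^ 2) = 1 := by
      rw [← Real.exp_add, show (-2:ℝ) * v * η ^ 2 + 2 * v * η ^ 2 = 0 by ring, Real.exp_zero]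
    nlinarith [ENNReal.toReal_nonneg (a := μ {ω | Real.exp (2 * v * η ^ 2) ≤ P T ω})]
  calc μ _ ≤ μ {ω | Real.exp (2 * v * η ^ 2) ≤ P T ω} := measure_mono hsubset
    _ = ENNReal.ofReal (μ {ω | Real.exp (2 * v * η ^ 2) ≤ P T ω}).toReal :=
        (ENNReal.ofReal_toReal (measure_ne_top μ _)).symm
    _ ≤ ENNReal.ofReal (Real.exp (-2 * v * η ^ 2)) := ENNReal.ofReal_le_ofReal htoReal
end

section
/- KL upper bound between two Plackett-Luce winner distributions (no pivot case): with R = (1/2+ε)/(1/2-ε) > 1, k items of which r have weight R² and k-r have weight 1 in instance P, versus r+1 of weight R² and k-r-1 of weight 1 in instance Q (the altered item switching from weight 1 to R²), the chi-square bound KL(P,Q) ≤ Σ_x P(x)²/Q(x) - 1 evaluates to at most (R - 1/R)² · (rR² + k - r - 1)/(rR² + k - r)². -/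
/-- KL upper bound between two Plackett-Luce winner distributions (no pivot):
with R = (1/2+ε)/(1/2-ε) > 1, P the categorical distribution on k outcomes with
r outcomes of weight R² and k-r of weight 1, and Q the one where one additional
outcome of weight 1 is promoted to weight R², the chi-square bound
Σ_x P(x)²/Q(x) - 1 is at most (R - 1/R)²·(rR² + k - r - 1)/(rR² + k - r)². -/
theorem kl_chi_square_bound (ε : ℝ) (hε0 : 0 < ε) (hε : ε < 1/2)
    (k r : ℕ) (hk : 0 < k) (hr : r + 1 ≤ k)
    (R A B : ℝ) (hR : R = (1/2 + ε) / (1/2 - ε))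
    (hA : A = r * R ^ 2 + ((k : ℝ) - r))
    (hB : B = (r + 1) * R ^ 2 + ((k : ℝ) - r - 1))
    (P Q : Fin k → ℝ)
    (hP : ∀ x, P x = if (x : ℕ) < r then R ^ 2 / A else 1 / A)
    (hQ : ∀ x, Q x = if (x : ℕ) < r + 1 then R ^ 2 / B else 1 / B) :
    (∑ x, (P x) ^ 2 / Q x) - 1
      ≤ (R - 1 / R) ^ 2 * (r * R ^ 2 + ((k : ℝ) - r - 1)) / A ^ 2 := by
  have hε2 : (0:ℝ) < 1/2 - ε := by linarith
  have hR1 : 1 < R := by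
    rw [hR, lt_div_iff₀ hε2]; linarith
  have hRpos : (0:ℝ) < R := lt_trans one_pos hR1
  have hRne : R ≠ 0 := ne_of_gt hRpos
  have hkr : (r:ℝ) + 1 ≤ k := by exact_mod_cast hr
  have hrR : (0:ℝ) ≤ r * R ^ 2 := by positivity
  have hApos : 0 < A := by rw [hA]; nlinarith
  have hBpos : 0 < B := by rw [hB]; nlinarith
  have hAne : A ≠ 0 := ne_of_gt hApos
  have hBne : B ≠ 0 := ne_of_gt hBpos
  set g : ℕ → ℝ := fun i =>
    if i < r then R^2*B/A^2 else if i < r+1 then B/(A^2*R^2) else B/A^2 with hg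
  have key : ∀ x : Fin k, P x ^ 2 / Q x = g (x : ℕ) := by
    intro x
    rw [hP, hQ]; simp only [hg]
    by_cases h1 : (x:ℕ) < r
    · rw [if_pos h1, if_pos (by omega : (x:ℕ) < r+1), if_pos h1]
      field_simp
    · rw [if_neg h1, if_neg h1]
      by_cases h2 : (x:ℕ) < r+1
      · rw [if_pos h2, if_pos h2]; field_simp
      · rw [if_neg h2, if_neg h2]; field_simp
  rw [Finset.sum_congr rfl (fun x _ => key x), Fin.sum_univ_eq_sum_range]
  have c1 : ∀ i ∈ Finset.range r, g i = R^2*B/A^2 := by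
    intro i hi; simp only [hg]; rw [if_pos (Finset.mem_range.mp hi)]
  have c2 : g r = B/(A^2*R^2) := by
    simp only [hg]; rw [if_neg (lt_irrefl r), if_pos (Nat.lt_succ_self r)]
  have c3 : ∀ i ∈ Finset.Ico (r+1) k, g i = B/A^2 := by
    intro i hi
    have hi' := Finset.mem_Ico.mp hi
    simp only [hg]; rw [if_neg (by omega), if_neg (by omega)]
  have hsum : ∑ i ∈ Finset.range k, g i
      = r * (R^2*B/A^2) + B/(A^2*R^2) + ((k:ℝ) - r - 1) * (B/A^2) := by
    rw [← Finset.sum_range_add_sum_Ico g hr, Finset.sum_range_succ,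
      Finset.sum_congr rfl c1, Finset.sum_congr rfl c3, Finset.sum_const,
      Finset.sum_const, Finset.card_range, Nat.card_Ico, nsmul_eq_mul, nsmul_eq_mul,
      c2]
    have : ((k - (r+1) : ℕ) : ℝ) = (k:ℝ) - r - 1 := by
      push_cast [Nat.cast_sub hr]; ring
    rw [this]
  rw [hsum]
  have comb : (r:ℝ) * (R^2*B/A^2) + B/(A^2*R^2) + ((k:ℝ) - r - 1) * (B/A^2)
      = ((r:ℝ)*R^2 + ((k:ℝ)-r-1))*B/A^2 + B/(A^2*R^2) := by ring
  rw [comb]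
  have main : ∀ C : ℝ, C + 1 ≠ 0 →
      C*(C+R^2)/(C+1)^2 + (C+R^2)/((C+1)^2*R^2) - 1
        = (R-1/R)^2*C/(C+1)^2 := by
    intro C hC
    field_simp
    ring
  have e1 : A = ((r:ℝ)*R^2 + ((k:ℝ)-r-1)) + 1 := by rw [hA]; ring
  have e2 : B = ((r:ℝ)*R^2 + ((k:ℝ)-r-1)) + R^2 := by rw [hB]; ring
  have hC1 : ((r:ℝ)*R^2 + ((k:ℝ)-r-1)) + 1 ≠ 0 := by rw [← e1]; exact hAne
  rw [e1, e2]
  exact le_of_eq (main _ hC1)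
end
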